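/- arXiv:1305.7003 — 5 statements merged into one kernel-verified Lean document; each statement's English description precedes it below -/
import Mathlib

section
/- For every u₀ ∈ Int(Dom(φ)) there exist constants r₀ > 0 and M₀ > 0 such that r₀ |∇φ_ε(x)| ≤ ⟨∇φ_ε(x), x − u₀⟩ + M₀ for every ε > 0 and every x ∈ ℝᵈ. -/
open scoped RealInnerProductSpace

lemma my_subgrad {E : Type*} [NormedAddCommGroup E] [InnerProductSpace ℝ E]
    [CompleteSpace E] {g : E → ℝ}
    (hconv : ConvexOn ℝ Set.univ g) (hdiff : Differentiable ℝ g) (x y : E) :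
    ⟪gradient g x, y - x⟫ ≤ g y - g x := by
  set h : ℝ → ℝ := fun t => g (x + t • (y - x)) with hh
  have hc : HasDerivAt (fun t : ℝ => x + t • (y - x)) (y - x) 0 := by
    simpa using ((hasDerivAt_id (0:ℝ)).smul_const (y - x)).const_add x
  have hfd : HasFDerivAt g ((InnerProductSpace.toDual ℝ E) (gradient g x)) x :=
    hasGradientAt_iff_hasFDerivAt.mp (hdiff x).hasGradientAt
  have h0 : HasDerivAt h (⟪gradient g x, y - x⟫) 0 := by
    have hfd' : HasFDerivAt g ((InnerProductSpace.toDual ℝ E) (gradient g x))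
        ((fun t : ℝ => x + t • (y - x)) 0) := by simpa using hfd
    have := hfd'.comp_hasDerivAt 0 hc
    simp only [InnerProductSpace.toDual_apply_apply] at this
    exact this
  have hcomp : ConvexOn ℝ Set.univ h := by
    refine ⟨convex_univ, fun s _ t _ a b ha hb hab => ?_⟩
    have key : x + (a * s + b * t) • (y - x)
        = a • (x + s • (y - x)) + b • (x + t • (y - x)) := by
      rw [smul_add, smul_add, smul_smul, smul_smul]
      rw [show a • x + (a * s) • (y - x) + (b • x + (b * t) • (y - x))
        = (a + b) • x + (a * s + b * t) • (y - x) by module, hab, one_smul]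
    have := hconv.2 (Set.mem_univ (x + s • (y - x))) (Set.mem_univ (x + t • (y - x))) ha hb hab
    simpa [hh, smul_eq_mul, key] using this
  have hs := hcomp.le_slope_of_hasDerivAt (Set.mem_univ (0:ℝ)) (Set.mem_univ 1) one_pos h0
  rw [slope_def_field] at hs
  simpa [hh] using hs

/-- For every u₀ ∈ Int(Dom(φ)) there exist constants r₀ > 0 and M₀ > 0
such that r₀|∇φ_ε(x)| ≤ ⟨∇φ_ε(x), x − u₀⟩ + M₀ for every ε > 0 and every x ∈ ℝᵈ.
Here `g ε` denotes the real-valued C¹ Moreau–Yosida regularization φ_ε. -/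
theorem moreau_yosida_gradient_interior_bound {d : ℕ} (hd : 0 < d)
    (φ : EuclideanSpace ℝ (Fin d) → EReal)
    (hbot : ∀ x, φ x ≠ ⊥)
    (hconv : ∀ x y : EuclideanSpace ℝ (Fin d), ∀ a b : ℝ,
      0 ≤ a → 0 ≤ b → a + b = 1 →
      φ (a • x + b • y) ≤ (a : EReal) * φ x + (b : EReal) * φ y)
    (hlsc : LowerSemicontinuous φ)
    (hzero : φ 0 = 0)
    (hpos : ∀ x, (0 : EReal) ≤ φ x)
    (h0int : (0 : EuclideanSpace ℝ (Fin d)) ∈ interior {w | φ w ≠ ⊤})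
    (g : ℝ → EuclideanSpace ℝ (Fin d) → ℝ)
    (hg : ∀ ε : ℝ, 0 < ε → ∀ x, (g ε x : EReal) =
      ⨅ v : EuclideanSpace ℝ (Fin d),
        (((‖v - x‖ ^ 2 / (2 * ε)) : ℝ) : EReal) + φ v)
    (hg1 : ∀ ε : ℝ, 0 < ε → ContDiff ℝ 1 (g ε))
    (u₀ : EuclideanSpace ℝ (Fin d))
    (hu₀ : u₀ ∈ interior {w | φ w ≠ ⊤}) :
    ∃ r₀ > (0 : ℝ), ∃ M₀ > (0 : ℝ), ∀ ε : ℝ, 0 < ε →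
      ∀ x : EuclideanSpace ℝ (Fin d),
        r₀ * ‖gradient (g ε) x‖ ≤ ⟪gradient (g ε) x, x - u₀⟫ + M₀ := by
  classical
  set S : Set (EuclideanSpace ℝ (Fin d)) := {w | φ w ≠ ⊤} with hS
  set f : (EuclideanSpace ℝ (Fin d)) → ℝ := fun w => (φ w).toReal with hf
  -- basic coercion fact
  have hφeq : ∀ w, φ w ≠ ⊤ → φ w = ((f w : ℝ) : EReal) := fun w hw =>
    (EReal.coe_toReal hw (hbot w)).symm
  -- S is convex
  have hSconv : Convex ℝ S := by
    intro x hx y hy a b ha hb hab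
    have h1 := hconv x y a b ha hb hab
    rw [hφeq x hx, hφeq y hy, ← EReal.coe_mul, ← EReal.coe_mul, ← EReal.coe_add] at h1
    exact ne_top_of_le_ne_top (EReal.coe_ne_top _) h1
  -- f is convex on S
  have fconvexS : ConvexOn ℝ S f := by
    refine ⟨hSconv, fun x hx y hy a b ha hb hab => ?_⟩
    have hcombS : a • x + b • y ∈ S := hSconv hx hy ha hb hab
    have h1 := hconv x y a b ha hb hab
    rw [hφeq x hx, hφeq y hy, hφeq _ hcombS,
      ← EReal.coe_mul, ← EReal.coe_mul, ← EReal.coe_add] at h1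
    exact_mod_cast h1
  have hUsub : interior S ⊆ S := interior_subset
  have hUconv : Convex ℝ (interior S) := hSconv.interior
  have fcont : ContinuousOn f (interior S) :=
    (fconvexS.subset hUsub hUconv).continuousOn isOpen_interior
  -- choose the small ball around u₀
  obtain ⟨r, hr, hball⟩ := Metric.isOpen_iff.mp isOpen_interior u₀ hu₀
  set r₀ : ℝ := r / 2 with hr₀def
  have hr₀ : 0 < r₀ := by positivity
  have hcb : Metric.closedBall u₀ r₀ ⊆ interior S :=
    (Metric.closedBall_subset_ball (by simpa [hr₀def] using half_lt_self hr)).trans hball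
  -- bound for f on the closed ball
  obtain ⟨C, hC⟩ := (isCompact_closedBall u₀ r₀).exists_bound_of_continuousOn (fcont.mono hcb)
  have hC0 : 0 ≤ C :=
    le_trans (norm_nonneg _) (hC u₀ (Metric.mem_closedBall_self hr₀.le))
  refine ⟨r₀, hr₀, C + 1, by linarith, fun ε hε x => ?_⟩
  -- facts about g ε
  have ggeq := hg ε hε
  have gnonneg : ∀ z, 0 ≤ g ε z := by
    intro z
    have h0 : (0 : EReal) ≤ (g ε z : EReal) := by
      rw [ggeq z]
      exact le_iInf fun v => add_nonneg (EReal.coe_nonneg.mpr (by positivity)) (hpos v)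
    exact_mod_cast h0
  have gleS : ∀ y, φ y ≠ ⊤ → g ε y ≤ f y := by
    intro y hy
    have h0 : (g ε y : EReal) ≤ ((f y : ℝ) : EReal) := by
      rw [ggeq y]
      refine (iInf_le _ y).trans ?_
      rw [hφeq y hy]
      simp
    exact_mod_cast h0
  have approx : ∀ z : (EuclideanSpace ℝ (Fin d)), ∀ δ : ℝ, 0 < δ →
      ∃ v, φ v ≠ ⊤ ∧ ‖v - z‖ ^ 2 / (2 * ε) + f v ≤ g ε z + δ := by
    intro z δ hδ
    have hlt : (⨅ v : (EuclideanSpace ℝ (Fin d)), (((‖v - z‖ ^ 2 / (2 * ε)) : ℝ) : EReal) + φ v)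
        < ((g ε z + δ : ℝ) : EReal) := by
      rw [← ggeq z]
      exact_mod_cast lt_add_of_pos_right _ hδ
    obtain ⟨v, hv⟩ := iInf_lt_iff.mp hlt
    have hvtop : φ v ≠ ⊤ := by
      intro h
      rw [h, EReal.add_top_of_ne_bot (EReal.coe_ne_bot _)] at hv
      exact (not_top_lt hv)
    rw [hφeq v hvtop, ← EReal.coe_add] at hv
    exact ⟨v, hvtop, le_of_lt (by exact_mod_cast hv)⟩
  -- convexity of g ε
  have gconv : ConvexOn ℝ Set.univ (g ε) := by
    refine ⟨convex_univ, fun x' _ y' _ a b ha hb hab => ?_⟩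
    simp only [smul_eq_mul]
    refine le_of_forall_pos_le_add fun δ hδ => ?_
    obtain ⟨v, hv1, hv2⟩ := approx x' δ hδ
    obtain ⟨w, hw1, hw2⟩ := approx y' δ hδ
    have hu : φ (a • v + b • w) ≠ ⊤ := hSconv hv1 hw1 ha hb hab
    have key : (g ε (a • x' + b • y') : EReal)
        ≤ ((‖(a • v + b • w) - (a • x' + b • y')‖ ^ 2 / (2 * ε) + f (a • v + b • w) : ℝ)
            : EReal) := by
      rw [ggeq _]
      refine (iInf_le _ (a • v + b • w)).trans ?_
      rw [hφeq _ hu, ← EReal.coe_add]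
    have key' : g ε (a • x' + b • y')
        ≤ ‖(a • v + b • w) - (a • x' + b • y')‖ ^ 2 / (2 * ε) + f (a • v + b • w) := by
      exact_mod_cast key
    have hn : ‖(a • v + b • w) - (a • x' + b • y')‖ ≤ a * ‖v - x'‖ + b * ‖w - y'‖ := by
      have hrw : (a • v + b • w) - (a • x' + b • y') = a • (v - x') + b • (w - y') := by
        module
      rw [hrw]
      refine (norm_add_le _ _).trans ?_
      rw [norm_smul, norm_smul]
      simp [abs_of_nonneg ha, abs_of_nonneg hb]
    have h2 : ‖(a • v + b • w) - (a • x' + b • y')‖ ^ 2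
        ≤ a * ‖v - x'‖ ^ 2 + b * ‖w - y'‖ ^ 2 := by
      nlinarith [norm_nonneg ((a • v + b • w) - (a • x' + b • y')), hn,
        mul_nonneg ha hb, sq_nonneg (‖v - x'‖ - ‖w - y'‖), norm_nonneg (v - x'),
        norm_nonneg (w - y')]
    have key2 : ‖(a • v + b • w) - (a • x' + b • y')‖ ^ 2 / (2 * ε)
        ≤ a * (‖v - x'‖ ^ 2 / (2 * ε)) + b * (‖w - y'‖ ^ 2 / (2 * ε)) := by
      rw [show a * (‖v - x'‖ ^ 2 / (2 * ε)) + b * (‖w - y'‖ ^ 2 / (2 * ε))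
        = (a * ‖v - x'‖ ^ 2 + b * ‖w - y'‖ ^ 2) / (2 * ε) by ring]
      exact div_le_div_of_nonneg_right h2 (by positivity)
    have key3 : f (a • v + b • w) ≤ a * f v + b * f w := fconvexS.2 hv1 hw1 ha hb hab
    have hav := mul_le_mul_of_nonneg_left hv2 ha
    have hbw := mul_le_mul_of_nonneg_left hw2 hb
    nlinarith [hav, hbw, key', key2, key3]
  -- final assembly
  set p := gradient (g ε) x with hp
  by_cases hp0 : p = 0
  · rw [hp0]
    simp only [norm_zero, mul_zero, inner_zero_left]
    linarith
  · have hpn : 0 < ‖p‖ := norm_pos_iff.mpr hp0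
    set y := u₀ + (r₀ / ‖p‖) • p with hy
    have hyd : y ∈ Metric.closedBall u₀ r₀ := by
      rw [Metric.mem_closedBall, dist_eq_norm, hy, add_sub_cancel_left, norm_smul,
        Real.norm_of_nonneg (div_pos hr₀ hpn).le, div_mul_cancel₀ _ hpn.ne']
    have hyS : φ y ≠ ⊤ := hUsub (hcb hyd)
    have h1 : g ε y ≤ C :=
      (gleS y hyS).trans ((le_abs_self _).trans (by simpa using hC y hyd))
    have hdiff : Differentiable ℝ (g ε) := (hg1 ε hε).differentiable one_ne_zero
    have hsub : ⟪p, y - x⟫ ≤ g ε y - g ε x := my_subgrad gconv hdiff x y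
    have hinner : ⟪p, y - x⟫ = ⟪p, u₀ - x⟫ + r₀ * ‖p‖ := by
      have hyx : y - x = (u₀ - x) + (r₀ / ‖p‖) • p := by rw [hy]; abel
      rw [hyx, inner_add_right, real_inner_smul_right, real_inner_self_eq_norm_sq]
      field_simp
    have hsplit : ⟪p, u₀ - x⟫ = -⟪p, x - u₀⟫ := by
      rw [show (u₀ - x : (EuclideanSpace ℝ (Fin d))) = -(x - u₀) by abel, inner_neg_right]
    have hg0 := gnonneg x
    rw [hinner, hsplit] at hsub
    linarith
end

section
/- Let A : ℝ → Set ℝ be an operator whose graph G := {(x, y) : y ∈ A(x)} is nonempty and maximal monotone, i.e. (y − y')(x − x') ≥ 0 for all (x, y), (x', y') ∈ G, and G is not properly contained in the graph of any other monotone operator. Then there exists a proper, convex, lower semicontinuous function ψ : ℝ → (−∞, +∞] such that A(x) = ∂ψ(x) for every x ∈ ℝ. -/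
open MeasureTheory intervalIntegral Set

namespace MaxMonoAux

/-- The first coordinate of the head of a list, with default `z`. -/
def headX : List (ℝ × ℝ) → ℝ → ℝ
  | [], z => z
  | q :: _, _ => q.1

@[simp] lemma headX_nil (z : ℝ) : headX [] z = z := rfl
@[simp] lemma headX_cons (q : ℝ × ℝ) (l : List (ℝ × ℝ)) (z : ℝ) :
    headX (q :: l) z = q.1 := rfl

/-- The Rockafellar chain sum `∑ yᵢ (x_{i+1} - xᵢ)` terminating at `z`. -/
def linSum : List (ℝ × ℝ) → ℝ → ℝ
  | [], _ => 0
  | p :: l, z => p.2 * (headX l z - p.1) + linSum l z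

@[simp] lemma linSum_nil (z : ℝ) : linSum [] z = 0 := rfl
@[simp] lemma linSum_cons (p : ℝ × ℝ) (l : List (ℝ × ℝ)) (z : ℝ) :
    linSum (p :: l) z = p.2 * (headX l z - p.1) + linSum l z := rfl

lemma headX_append_single (l : List (ℝ × ℝ)) (q : ℝ × ℝ) (z : ℝ) :
    headX (l ++ [q]) z = headX l q.1 := by
  cases l <;> rfl

lemma linSum_append_single (l : List (ℝ × ℝ)) (q : ℝ × ℝ) (z : ℝ) :
    linSum (l ++ [q]) z = linSum l q.1 + q.2 * (z - q.1) := by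
  induction l with
  | nil => simp [linSum, headX]
  | cons p l ih =>
      simp only [List.cons_append, linSum_cons, headX_cons, ih,
        headX_append_single]
      ring

lemma linSum_continuous (l : List (ℝ × ℝ)) : Continuous fun z => linSum l z := by
  induction l with
  | nil => simpa using continuous_const
  | cons p l ih =>
      cases l with
      | nil =>
          simp only [linSum_cons, headX_nil, linSum_nil, add_zero]
          fun_prop
      | cons q l' =>
          simp only [linSum_cons, headX_cons]
          exact (continuous_const.add ih)

lemma linSum_affine (l : List (ℝ × ℝ)) (x y a b : ℝ) (hab : a + b = 1) :
    linSum l (a * x + b * y) = a * linSum l x + b * linSum l y := by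
  induction l with
  | nil => simp
  | cons p l ih =>
      cases l with
      | nil =>
          simp only [linSum_cons, headX_nil, linSum_nil, add_zero]
          have h1 : a * x + b * y - p.1 = a * (x - p.1) + b * (y - p.1) := by
            have : (a + b) * p.1 = p.1 := by rw [hab, one_mul]
            ring_nf
            linarith [this]
          rw [h1]; ring
      | cons q l' =>
          simp only [linSum_cons, headX_cons, ih]
          have : p.2 * (q.1 - p.1) = a * (p.2 * (q.1 - p.1)) + b * (p.2 * (q.1 - p.1)) := by
            have : (a + b) * (p.2 * (q.1 - p.1)) = p.2 * (q.1 - p.1) := by rw [hab, one_mul]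
            linarith [this]
          nlinarith [this]

/-! ### Generic foldr lemmas -/

lemma foldr_min_le {l : List ℝ} {x c : ℝ} (hx : x ∈ l) : l.foldr min c ≤ x := by
  induction l with
  | nil => simp at hx
  | cons a l ih =>
      rcases List.mem_cons.mp hx with h | h
      · subst h; exact min_le_left _ _
      · exact le_trans (min_le_right _ _) (ih h)

lemma le_foldr_max {l : List ℝ} {x c : ℝ} (hx : x ∈ l) : x ≤ l.foldr max c := by
  induction l with
  | nil => simp at hx
  | cons a l ih =>
      rcases List.mem_cons.mp hx with h | h
      · subst h; exact le_max_left _ _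
      · exact le_trans (ih h) (le_max_right _ _)

lemma foldr_max_le {l : List ℝ} {c Y : ℝ} (hc : c ≤ Y) (h : ∀ x ∈ l, x ≤ Y) :
    l.foldr max c ≤ Y := by
  induction l with
  | nil => simpa using hc
  | cons a l ih =>
      exact max_le (h a List.mem_cons_self) (ih fun x hx => h x (List.mem_cons_of_mem a hx))

/-! ### The monotone upper envelope of a finite list of points -/

/-- A lower bound for the second coordinates of a list. -/
noncomputable def mlo (L : List (ℝ × ℝ)) : ℝ := (L.map Prod.snd).foldr min 0

lemma mlo_le {L : List (ℝ × ℝ)} {p : ℝ × ℝ} (hp : p ∈ L) : mlo L ≤ p.2 :=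
  foldr_min_le (List.mem_map_of_mem (f := Prod.snd) hp)

/-- Monotone step function dominating a monotone list of points. -/
noncomputable def upEnv (L : List (ℝ × ℝ)) (t : ℝ) : ℝ :=
  (L.map (fun p => if p.1 ≤ t then p.2 else mlo L)).foldr max (mlo L)

lemma upEnv_mono (L : List (ℝ × ℝ)) : Monotone (upEnv L) := by
  have key : ∀ (l : List (ℝ × ℝ)), (∀ p ∈ l, mlo L ≤ p.2) →
      Monotone fun t => (l.map (fun p => if p.1 ≤ t then p.2 else mlo L)).foldr max (mlo L) := by
    intro l hl
    induction l with
    | nil => exact monotone_const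
    | cons p l ih =>
        have hm : Monotone fun t => if p.1 ≤ t then p.2 else mlo L := by
          intro s t hst
          by_cases hs : p.1 ≤ s
          · simp [hs, hs.trans hst]
          · by_cases ht : p.1 ≤ t
            · simp [hs, ht]; exact hl p List.mem_cons_self
            · simp [hs, ht]
        have ih' := ih fun q hq => hl q (List.mem_cons_of_mem p hq)
        intro s t hst
        simp only [List.map_cons, List.foldr_cons]
        exact max_le_max (hm hst) (ih' hst)
  intro s t hst
  exact key L (fun p hp => mlo_le hp) hst

lemma le_upEnv {L : List (ℝ × ℝ)} {p : ℝ × ℝ} (hp : p ∈ L) {t : ℝ} (ht : p.1 ≤ t) :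
    p.2 ≤ upEnv L t := by
  have : p.2 = (fun q : ℝ × ℝ => if q.1 ≤ t then q.2 else mlo L) p := by simp [ht]
  rw [this]
  exact le_foldr_max (List.mem_map_of_mem (f := fun q : ℝ × ℝ => if q.1 ≤ t then q.2 else mlo L) hp)

lemma upEnv_le {L : List (ℝ × ℝ)} {t Y : ℝ} (hY : mlo L ≤ Y)
    (h : ∀ q ∈ L, q.1 ≤ t → q.2 ≤ Y) : upEnv L t ≤ Y := by
  apply foldr_max_le hY
  intro x hx
  rcases List.mem_map.mp hx with ⟨q, hq, rfl⟩
  by_cases hqt : q.1 ≤ t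
  · simpa [hqt] using h q hq hqt
  · simpa [hqt] using hY

lemma upEnv_intervalIntegrable (L : List (ℝ × ℝ)) (a b : ℝ) :
    IntervalIntegrable (upEnv L) volume a b :=
  (upEnv_mono L).intervalIntegrable

/-- The key segment estimate. -/
lemma segment_le {L : List (ℝ × ℝ)}
    (hmL : ∀ p ∈ L, ∀ q ∈ L, 0 ≤ (p.2 - q.2) * (p.1 - q.1))
    {p : ℝ × ℝ} (hp : p ∈ L) (b : ℝ) :
    p.2 * (b - p.1) ≤ ∫ t in p.1..b, upEnv L t := by
  by_cases hab : p.1 ≤ b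
  · have h1 : (∫ t in p.1..b, (p.2 : ℝ)) ≤ ∫ t in p.1..b, upEnv L t := by
      apply integral_mono_on hab intervalIntegrable_const (upEnv_intervalIntegrable L _ _)
      intro t ht
      exact le_upEnv hp ht.1
    have h2 : (∫ t in p.1..b, (p.2 : ℝ)) = p.2 * (b - p.1) := by
      simp [intervalIntegral.integral_const, mul_comm]
    linarith [h1, h2]
  · push_neg at hab
    rw [intervalIntegral.integral_symm]
    have hae : ∀ᵐ t ∂(volume.restrict (Set.Icc b p.1)), upEnv L t ≤ p.2 := by
      have h0 : ∀ᵐ (t : ℝ) ∂volume, t ≠ p.1 := by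
        rw [MeasureTheory.ae_iff]
        have : {t : ℝ | ¬ t ≠ p.1} = {p.1} := by ext t; simp
        rw [this]
        exact Real.volume_singleton
      filter_upwards [MeasureTheory.ae_restrict_of_ae h0,
        MeasureTheory.ae_restrict_mem measurableSet_Icc] with t ht htm
      have htlt : t < p.1 := lt_of_le_of_ne htm.2 ht
      apply upEnv_le (mlo_le hp)
      intro q hq hqt
      have := hmL q hq p hp
      nlinarith [this, hqt.trans_lt htlt]
    have h1 : (∫ t in b..p.1, upEnv L t) ≤ ∫ t in b..p.1, (p.2 : ℝ) := by
      exact integral_mono_ae_restrict hab.le (upEnv_intervalIntegrable L _ _)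
        intervalIntegrable_const hae
    have h2 : (∫ t in b..p.1, (p.2 : ℝ)) = p.2 * (p.1 - b) := by
      simp [intervalIntegral.integral_const, mul_comm]
    have : (∫ t in b..p.1, upEnv L t) ≤ p.2 * (p.1 - b) := by linarith
    linarith [this]

lemma chain_bound {L : List (ℝ × ℝ)}
    (hmL : ∀ p ∈ L, ∀ q ∈ L, 0 ≤ (p.2 - q.2) * (p.1 - q.1)) :
    ∀ (l : List (ℝ × ℝ)), (∀ p ∈ l, p ∈ L) → ∀ z : ℝ,
      linSum l z ≤ ∫ t in (headX l z)..z, upEnv L t := by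
  intro l
  induction l with
  | nil => intro _ z; simp
  | cons p l ih =>
      intro hsub z
      have hsub' : ∀ q ∈ l, q ∈ L := fun q hq => hsub q (List.mem_cons_of_mem p hq)
      have hp : p ∈ L := hsub p List.mem_cons_self
      have h1 := segment_le hmL hp (headX l z)
      have h2 := ih hsub' z
      have h3 : (∫ t in p.1..(headX l z), upEnv L t) + (∫ t in (headX l z)..z, upEnv L t)
          = ∫ t in p.1..z, upEnv L t :=
        integral_add_adjacent_intervals (upEnv_intervalIntegrable L _ _)
          (upEnv_intervalIntegrable L _ _)
      simp only [linSum_cons, headX_cons]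
      linarith [h1, h2, h3]

/-- Cyclic monotonicity in dimension one. -/
lemma cyclic_le_zero {l : List (ℝ × ℝ)} {p : ℝ × ℝ}
    (hmL : ∀ q ∈ p :: l, ∀ r ∈ p :: l, 0 ≤ (q.2 - r.2) * (q.1 - r.1)) :
    linSum (p :: l) p.1 ≤ 0 := by
  have := chain_bound hmL (p :: l) (fun q hq => hq) p.1
  simpa using this

end MaxMonoAux

open MaxMonoAux

/-- Every maximal monotone set-valued operator A : ℝ → Set ℝ (with
nonempty graph) is the subdifferential of a proper, convex, lower semicontinuous
function ψ : ℝ → (−∞, +∞]. -/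
theorem maximal_monotone_is_subdifferential (A : ℝ → Set ℝ)
    (hne : ∃ x y, y ∈ A x)
    (hmono : ∀ x x' y y' : ℝ, y ∈ A x → y' ∈ A x' → 0 ≤ (y - y') * (x - x'))
    (hmax : ∀ G' : Set (ℝ × ℝ),
      {p : ℝ × ℝ | p.2 ∈ A p.1} ⊆ G' →
      (∀ p ∈ G', ∀ q ∈ G', 0 ≤ (p.2 - q.2) * (p.1 - q.1)) →
      G' = {p : ℝ × ℝ | p.2 ∈ A p.1}) :
    ∃ ψ : ℝ → EReal,
      (∀ x, ψ x ≠ ⊥) ∧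
      (∃ x, ψ x ≠ ⊤) ∧
      (∀ x y a b : ℝ, 0 ≤ a → 0 ≤ b → a + b = 1 →
        ψ (a * x + b * y) ≤ (a : EReal) * ψ x + (b : EReal) * ψ y) ∧
      LowerSemicontinuous ψ ∧
      (∀ x : ℝ, A x = {y : ℝ | ∀ z : ℝ, ((y * (z - x) : ℝ) : EReal) + ψ x ≤ ψ z}) := by
  classical
  obtain ⟨x₀, y₀, h₀⟩ := hne
  set G : Set (ℝ × ℝ) := {p : ℝ × ℝ | p.2 ∈ A p.1} with hG
  -- index type of chains (tails; every chain starts at (x₀, y₀))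
  let ι := {l : List (ℝ × ℝ) // ∀ p ∈ l, p ∈ G}
  let chain : ι → List (ℝ × ℝ) := fun l => (x₀, y₀) :: l.1
  have hchainG : ∀ (l : ι), ∀ p ∈ chain l, p ∈ G := by
    intro l p hp
    rcases List.mem_cons.mp hp with h | h
    · subst h; exact h₀
    · exact l.2 p h
  set ψ : ℝ → EReal := fun z => ⨆ l : ι, ((linSum (chain l) z : ℝ) : EReal) with hψ
  have hιne : Nonempty ι := ⟨⟨[], by intro p hp; simp at hp⟩⟩
  -- lower bound: ψ z ≥ y₀ (z - x₀)
  have hlb : ∀ z : ℝ, ((y₀ * (z - x₀) : ℝ) : EReal) ≤ ψ z := by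
    intro z
    have : ((linSum (chain ⟨[], by intro p hp; simp at hp⟩) z : ℝ) : EReal) ≤ ψ z :=
      le_iSup (fun l : ι => ((linSum (chain l) z : ℝ) : EReal)) _
    simpa [chain, linSum, headX] using this
  have hne_bot : ∀ z, ψ z ≠ ⊥ := by
    intro z
    exact ((EReal.bot_lt_coe _).trans_le (hlb z)).ne'
  -- ψ x₀ ≤ 0
  have hx₀ : ψ x₀ ≤ (0 : EReal) := by
    apply iSup_le
    intro l
    have hm : ∀ q ∈ chain l, ∀ r ∈ chain l, 0 ≤ (q.2 - r.2) * (q.1 - r.1) := by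
      intro q hq r hr
      exact hmono q.1 r.1 q.2 r.2 (hchainG l q hq) (hchainG l r hr)
    have := cyclic_le_zero (l := l.1) (p := (x₀, y₀)) hm
    exact_mod_cast this
  have hne_top : ψ x₀ ≠ ⊤ := (hx₀.trans_lt (by norm_num)).ne
  refine ⟨ψ, hne_bot, ⟨x₀, hne_top⟩, ?_, ?_, ?_⟩
  · -- convexity
    intro x y a b ha hb hab
    apply iSup_le
    intro l
    have haff := linSum_affine (chain l) x y a b hab
    rw [haff]
    have h1 : ((a * linSum (chain l) x + b * linSum (chain l) y : ℝ) : EReal)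
        = (a : EReal) * ((linSum (chain l) x : ℝ) : EReal)
          + (b : EReal) * ((linSum (chain l) y : ℝ) : EReal) := by
      push_cast; rfl
    rw [h1]
    have hlx : ((linSum (chain l) x : ℝ) : EReal) ≤ ψ x :=
      le_iSup (fun l : ι => ((linSum (chain l) x : ℝ) : EReal)) l
    have hly : ((linSum (chain l) y : ℝ) : EReal) ≤ ψ y :=
      le_iSup (fun l : ι => ((linSum (chain l) y : ℝ) : EReal)) l
    have hax : (a : EReal) * ((linSum (chain l) x : ℝ) : EReal) ≤ (a : EReal) * ψ x :=
      mul_le_mul_of_nonneg_left hlx (by exact_mod_cast ha)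
    have hby : (b : EReal) * ((linSum (chain l) y : ℝ) : EReal) ≤ (b : EReal) * ψ y :=
      mul_le_mul_of_nonneg_left hly (by exact_mod_cast hb)
    exact add_le_add hax hby
  · -- lower semicontinuity
    apply lowerSemicontinuous_iSup
    intro l
    exact (continuous_coe_real_ereal.comp (linSum_continuous (chain l))).lowerSemicontinuous
  · -- subdifferential identity
    set Sub : Set (ℝ × ℝ) :=
      {p : ℝ × ℝ | ∀ z : ℝ, ((p.2 * (z - p.1) : ℝ) : EReal) + ψ p.1 ≤ ψ z} with hSub
    have hGsub : G ⊆ Sub := by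
      rintro ⟨a, c⟩ hac z
      simp only [Sub, Set.mem_setOf_eq]
      by_cases hz : ψ z = ⊤
      · rw [hz]; exact le_top
      · set r : ℝ := (ψ z).toReal with hr
        have hzr : ((r : ℝ) : EReal) = ψ z := EReal.coe_toReal hz (hne_bot z)
        have key : ψ a ≤ ((r - c * (z - a) : ℝ) : EReal) := by
          apply iSup_le
          intro l
          have hmem : ∀ p ∈ l.1 ++ [(a, c)], p ∈ G := by
            intro p hp
            rcases List.mem_append.mp hp with h | h
            · exact l.2 p h
            · simp at h; subst h; exact hac
          have hle : ((linSum (chain ⟨l.1 ++ [(a, c)], hmem⟩) z : ℝ) : EReal) ≤ ψ z :=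
            le_iSup (fun l : ι => ((linSum (chain l) z : ℝ) : EReal)) _
          have heq : linSum (chain ⟨l.1 ++ [(a, c)], hmem⟩) z
              = linSum (chain l) a + c * (z - a) := by
            have : chain ⟨l.1 ++ [(a, c)], hmem⟩ = (chain l) ++ [(a, c)] := by
              simp [chain]
            rw [this, linSum_append_single]
          rw [heq] at hle
          rw [← hzr] at hle
          have : linSum (chain l) a + c * (z - a) ≤ r := by exact_mod_cast hle
          have : linSum (chain l) a ≤ r - c * (z - a) := by linarith
          exact_mod_cast this
        calc ((c * (z - a) : ℝ) : EReal) + ψ a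
            ≤ ((c * (z - a) : ℝ) : EReal) + ((r - c * (z - a) : ℝ) : EReal) :=
              add_le_add_right key _
          _ = ((r : ℝ) : EReal) := by
              rw [← EReal.coe_add]; norm_num
          _ = ψ z := hzr
    have hSubMono : ∀ p ∈ Sub, ∀ q ∈ Sub, 0 ≤ (p.2 - q.2) * (p.1 - q.1) := by
      have hreal : ∀ p ∈ Sub, ψ p.1 ≠ ⊤ := by
        intro p hp htop
        have := hp x₀
        rw [htop] at this
        have h1 : ((p.2 * (x₀ - p.1) : ℝ) : EReal) + ⊤ = ⊤ :=
          EReal.add_top_of_ne_bot (EReal.coe_ne_bot _)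
        rw [h1] at this
        exact hne_top (top_le_iff.mp this)
      intro p hp q hq
      set u : ℝ := (ψ p.1).toReal with hu
      set v : ℝ := (ψ q.1).toReal with hv
      have hup : ((u : ℝ) : EReal) = ψ p.1 := EReal.coe_toReal (hreal p hp) (hne_bot _)
      have hvq : ((v : ℝ) : EReal) = ψ q.1 := EReal.coe_toReal (hreal q hq) (hne_bot _)
      have h1 := hp q.1
      have h2 := hq p.1
      rw [← hup, ← hvq] at h1 h2
      rw [← EReal.coe_add] at h1 h2
      have h1' : p.2 * (q.1 - p.1) + u ≤ v := by exact_mod_cast h1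
      have h2' : q.2 * (p.1 - q.1) + v ≤ u := by exact_mod_cast h2
      nlinarith [h1', h2']
    have hEq : Sub = G := hmax Sub hGsub hSubMono
    intro x
    ext y
    have : (x, y) ∈ Sub ↔ (x, y) ∈ G := by rw [hEq]
    simp only [Sub, Set.mem_setOf_eq, G] at this
    constructor
    · intro hy z
      exact (this.mpr hy) z
    · intro hy
      exact this.mp hy
end

section
/- For every x ∈ Int(Dom(φ)) and every z ∈ ℝᵈ, one has ∂φ_*(x; z) = inf_{x* ∈ ∂φ(x)} ⟨x*, z⟩ (the subdifferential ∂φ(x) being nonempty at interior points of the domain, this infimum is a real number). -/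
open scoped RealInnerProductSpace

/-- The subdifferential of an extended-real-valued function ψ at x. -/
def subdiff {d : ℕ} (ψ : EuclideanSpace ℝ (Fin d) → EReal)
    (x : EuclideanSpace ℝ (Fin d)) : Set (EuclideanSpace ℝ (Fin d)) :=
  {y | ∀ z, ((⟪y, z - x⟫ : ℝ) : EReal) + ψ x ≤ ψ z}

/-- ∂φ_*(x; z): the liminf of ⟨x*, z'⟩ over triples (x', z', x*) with x* ∈ ∂φ(x'),
as (x', z') → (x, z).  (Equivalently, the liminf as (x', z') → (x, z) of the infimum
of ⟨x*, z'⟩ over x* ∈ ∂φ(x'), computed in [−∞, +∞].) -/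
noncomputable def subdiffLiminf {d : ℕ} (φ : EuclideanSpace ℝ (Fin d) → EReal)
    (x z : EuclideanSpace ℝ (Fin d)) : EReal :=
  Filter.liminf
    (fun p : EuclideanSpace ℝ (Fin d) × EuclideanSpace ℝ (Fin d) =>
      ⨅ y ∈ subdiff φ p.1, ((⟪y, p.2⟫ : ℝ) : EReal))
    (nhds (x, z))

variable {d : ℕ}

lemma aux_coe (φ : EuclideanSpace ℝ (Fin d) → EReal) (hbot : ∀ x, φ x ≠ ⊥)
    {w : EuclideanSpace ℝ (Fin d)} (hw : φ w ≠ ⊤) :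
    φ w = ((φ w).toReal : EReal) := (EReal.coe_toReal hw (hbot w)).symm

lemma aux_convexOn (φ : EuclideanSpace ℝ (Fin d) → EReal) (hbot : ∀ x, φ x ≠ ⊥)
    (hconv : ∀ x y : EuclideanSpace ℝ (Fin d), ∀ a b : ℝ,
      0 ≤ a → 0 ≤ b → a + b = 1 →
      φ (a • x + b • y) ≤ (a : EReal) * φ x + (b : EReal) * φ y) :
    ConvexOn ℝ {w | φ w ≠ ⊤} (fun w => (φ w).toReal) := by
  have key : ∀ u ∈ {w | φ w ≠ ⊤}, ∀ v ∈ {w | φ w ≠ ⊤}, ∀ a b : ℝ,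
      0 ≤ a → 0 ≤ b → a + b = 1 →
      φ (a • u + b • v) ≤ ((a * (φ u).toReal + b * (φ v).toReal : ℝ) : EReal) := by
    intro u hu v hv a b ha hb hab
    have h := hconv u v a b ha hb hab
    rw [aux_coe φ hbot hu, aux_coe φ hbot hv] at h
    rw [EReal.coe_add, EReal.coe_mul, EReal.coe_mul]
    exact h
  constructor
  · intro u hu v hv a b ha hb hab
    exact ne_top_of_le_ne_top (EReal.coe_ne_top _) (key u hu v hv a b ha hb hab)
  · intro u hu v hv a b ha hb hab
    have h := key u hu v hv a b ha hb hab
    have hne : φ (a • u + b • v) ≠ ⊤ := ne_top_of_le_ne_top (EReal.coe_ne_top _) h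
    rw [aux_coe φ hbot hne] at h
    simp only [smul_eq_mul]
    exact_mod_cast h

lemma aux_subdiff_real (φ : EuclideanSpace ℝ (Fin d) → EReal) (hbot : ∀ x, φ x ≠ ⊥)
    {x₀ w y : EuclideanSpace ℝ (Fin d)} (hx₀ : φ x₀ ≠ ⊤) (hw : φ w ≠ ⊤)
    (hy : y ∈ subdiff φ x₀) :
    ⟪y, w - x₀⟫ + (φ x₀).toReal ≤ (φ w).toReal := by
  have h := hy w
  rw [aux_coe φ hbot hx₀, aux_coe φ hbot hw] at h
  exact_mod_cast h

lemma aux_mem_subdiff_of_forall (φ : EuclideanSpace ℝ (Fin d) → EReal)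
    (hbot : ∀ x, φ x ≠ ⊥)
    (hconvOn : ConvexOn ℝ {w | φ w ≠ ⊤} (fun w => (φ w).toReal))
    {x₀ y : EuclideanSpace ℝ (Fin d)}
    (hx₀ : x₀ ∈ interior {w | φ w ≠ ⊤})
    (h : ∀ w ∈ interior {w | φ w ≠ ⊤},
      ⟪y, w - x₀⟫ + (φ x₀).toReal ≤ (φ w).toReal) :
    y ∈ subdiff φ x₀ := by
  intro w
  by_cases hw : φ w = ⊤
  · rw [hw]; exact le_top
  · have hx₀D : φ x₀ ≠ ⊤ := interior_subset hx₀
    have hu : (2⁻¹ : ℝ) • x₀ + (2⁻¹ : ℝ) • w ∈ interior {w | φ w ≠ ⊤} :=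
      hconvOn.1.combo_interior_self_mem_interior hx₀ hw (by norm_num) (by norm_num)
        (by norm_num)
    have h1 := h _ hu
    have h2 : (φ ((2⁻¹ : ℝ) • x₀ + (2⁻¹ : ℝ) • w)).toReal ≤
        2⁻¹ * (φ x₀).toReal + 2⁻¹ * (φ w).toReal :=
      hconvOn.2 hx₀D hw (by norm_num) (by norm_num) (by norm_num)
    have h3 : ((2⁻¹ : ℝ) • x₀ + (2⁻¹ : ℝ) • w) - x₀ = (2⁻¹ : ℝ) • (w - x₀) := by
      rw [smul_sub]; module
    rw [h3, real_inner_smul_right] at h1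
    have : ⟪y, w - x₀⟫ + (φ x₀).toReal ≤ (φ w).toReal := by linarith
    rw [aux_coe φ hbot hx₀D, aux_coe φ hbot hw]
    exact_mod_cast this

lemma aux_exists_real_subgrad
    (D : Set (EuclideanSpace ℝ (Fin d))) (f : EuclideanSpace ℝ (Fin d) → ℝ)
    (hconvOn : ConvexOn ℝ D f)
    {x₀ : EuclideanSpace ℝ (Fin d)} (hx₀ : x₀ ∈ interior D) :
    ∃ y : EuclideanSpace ℝ (Fin d), ∀ w ∈ interior D,
      ⟪y, w - x₀⟫ + f x₀ ≤ f w := by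
  have hconv' : ConvexOn ℝ (interior D) f :=
    hconvOn.subset interior_subset hconvOn.1.interior
  have hfc : ContinuousOn f (interior D) :=
    ConvexOn.continuousOn isOpen_interior hconv'
  set S : Set (EuclideanSpace ℝ (Fin d) × ℝ) :=
    {p | p.1 ∈ interior D ∧ f p.1 < p.2} with hS
  have hSopen : IsOpen S := by
    have : S = (interior D ×ˢ (Set.univ : Set ℝ)) ∩
        (fun p : EuclideanSpace ℝ (Fin d) × ℝ => p.2 - f p.1) ⁻¹' Set.Ioi 0 := by
      ext p; simp [hS, sub_pos, and_comm]
    rw [this]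
    refine ContinuousOn.isOpen_inter_preimage ?_ (isOpen_interior.prod isOpen_univ) isOpen_Ioi
    exact continuous_snd.continuousOn.sub
      (hfc.comp continuous_fst.continuousOn (fun p hp => hp.1))
  have hSconv : Convex ℝ S := by
    intro p hp q hq a b ha hb hab
    refine ⟨hconv'.1 hp.1 hq.1 ha hb hab, ?_⟩
    have h1 : f (a • p.1 + b • q.1) ≤ a * f p.1 + b * f q.1 :=
      hconv'.2 hp.1 hq.1 ha hb hab
    have h2 : a * f p.1 + b * f q.1 < a * p.2 + b * q.2 := by
      rcases eq_or_lt_of_le ha with h | h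
      · have hb1 : b = 1 := by linarith
        simp only [← h, hb1, zero_mul, one_mul, zero_add]
        exact hq.2
      · have := mul_lt_mul_of_pos_left hp.2 h
        have := mul_le_mul_of_nonneg_left hq.2.le hb
        linarith
    exact lt_of_le_of_lt h1 h2
  have hnot : ((x₀, f x₀) : EuclideanSpace ℝ (Fin d) × ℝ) ∉ S := fun h => lt_irrefl _ h.2
  obtain ⟨ℓ, hℓ⟩ := geometric_hahn_banach_open_point hSconv hSopen hnot
  set c : ℝ := ℓ ((0 : EuclideanSpace ℝ (Fin d)), (1 : ℝ)) with hcdef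
  have hdec : ∀ (w : EuclideanSpace ℝ (Fin d)) (t : ℝ), ℓ (w, t) = ℓ (w, 0) + t * c := by
    intro w t
    have : ((w, t) : EuclideanSpace ℝ (Fin d) × ℝ)
        = (w, 0) + t • ((0 : EuclideanSpace ℝ (Fin d)), (1 : ℝ)) := by
      simp [Prod.ext_iff]
    rw [this, map_add, map_smul, smul_eq_mul, hcdef]
  have hc : c < 0 := by
    have h1 : ((x₀, f x₀ + 1) : EuclideanSpace ℝ (Fin d) × ℝ) ∈ S :=
      ⟨hx₀, by simp only []; linarith⟩
    have := hℓ _ h1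
    rw [hdec x₀ (f x₀ + 1), hdec x₀ (f x₀)] at this
    linarith
  have key : ∀ w ∈ interior D, ℓ (w, 0) + f w * c ≤ ℓ (x₀, 0) + f x₀ * c := by
    intro w hw
    by_contra hcon
    push_neg at hcon
    set X := (ℓ (w, 0) + f w * c) - (ℓ (x₀, 0) + f x₀ * c) with hXdef
    set δ := X / (-c) with hδdef
    have hδ : 0 < δ := div_pos (by linarith) (by linarith)
    have hmem : ((w, f w + δ) : EuclideanSpace ℝ (Fin d) × ℝ) ∈ S :=
      ⟨hw, by simp only []; linarith⟩
    have h2 := hℓ _ hmem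
    rw [hdec w (f w + δ), hdec x₀ (f x₀)] at h2
    have hδc : δ * (-c) = X := div_mul_cancel₀ _ (by linarith)
    nlinarith [hδc, h2]
  set g : EuclideanSpace ℝ (Fin d) →L[ℝ] ℝ :=
    (-c)⁻¹ • (ℓ.comp (ContinuousLinearMap.inl ℝ (EuclideanSpace ℝ (Fin d)) ℝ)) with hgdef
  refine ⟨(InnerProductSpace.toDual ℝ (EuclideanSpace ℝ (Fin d))).symm g, fun w hw => ?_⟩
  rw [InnerProductSpace.toDual_symm_apply]
  have hval : g (w - x₀) = ((ℓ (w, 0) - ℓ (x₀, 0)) / (-c)) := by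
    rw [hgdef]
    simp only [ContinuousLinearMap.smul_apply, ContinuousLinearMap.comp_apply, map_sub,
      ContinuousLinearMap.inl_apply, smul_eq_mul]
    rw [div_eq_inv_mul]; ring
  rw [hval]
  have h2 : (ℓ (w, 0) - ℓ (x₀, 0)) ≤ (f w - f x₀) * (-c) := by nlinarith [key w hw]
  have h3 : (ℓ (w, 0) - ℓ (x₀, 0)) / (-c) ≤ f w - f x₀ :=
    (div_le_iff₀ (by linarith : (0:ℝ) < -c)).mpr h2
  linarith

lemma aux_norm_bound (φ : EuclideanSpace ℝ (Fin d) → EReal) (hbot : ∀ x, φ x ≠ ⊥)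
    {x' y : EuclideanSpace ℝ (Fin d)} {ε C : ℝ} (hε : 0 < ε)
    (hsub : Metric.closedBall x' ε ⊆ {w | φ w ≠ ⊤})
    (hC : ∀ w ∈ Metric.closedBall x' ε, |(φ w).toReal| ≤ C)
    (hy : y ∈ subdiff φ x') : ‖y‖ ≤ 2 * C / ε := by
  have hx'm : x' ∈ Metric.closedBall x' ε := Metric.mem_closedBall_self hε.le
  have hC0 : 0 ≤ C := (abs_nonneg _).trans (hC x' hx'm)
  by_cases hy0 : y = 0
  · simp [hy0]
    positivity
  · have hny : 0 < ‖y‖ := norm_pos_iff.mpr hy0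
    set w := x' + (ε / ‖y‖) • y with hwdef
    have hwm : w ∈ Metric.closedBall x' ε := by
      rw [Metric.mem_closedBall, dist_eq_norm, hwdef]
      have : x' + (ε / ‖y‖) • y - x' = (ε / ‖y‖) • y := by abel
      rw [this, norm_smul]
      rw [Real.norm_eq_abs, abs_of_pos (by positivity)]
      rw [div_mul_cancel₀ _ hny.ne']
    have hineq := aux_subdiff_real φ hbot (hsub hx'm) (hsub hwm) hy
    have hinner : ⟪y, w - x'⟫ = ε * ‖y‖ := by
      have : w - x' = (ε / ‖y‖) • y := by rw [hwdef]; abel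
      rw [this, real_inner_smul_right, real_inner_self_eq_norm_sq]
      field_simp
    rw [hinner] at hineq
    have h1 : |(φ w).toReal| ≤ C := hC w hwm
    have h2 : |(φ x').toReal| ≤ C := hC x' hx'm
    have h3 : ε * ‖y‖ ≤ 2 * C := by
      have := abs_le.mp h1
      have := abs_le.mp h2
      linarith
    rw [le_div_iff₀ hε]
    linarith [h3]

/-- For every x ∈ Int(Dom(φ)) and every z ∈ ℝᵈ one has
∂φ_*(x; z) = inf_{x* ∈ ∂φ(x)} ⟨x*, z⟩; the subdifferential ∂φ(x) is nonempty at such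
interior points and this infimum is a real number. -/
theorem subdiffLiminf_eq_inf_interior {d : ℕ} (hd : 0 < d)
    (φ : EuclideanSpace ℝ (Fin d) → EReal)
    (hbot : ∀ x, φ x ≠ ⊥)
    (hproper : ∃ x, φ x ≠ ⊤)
    (hconv : ∀ x y : EuclideanSpace ℝ (Fin d), ∀ a b : ℝ,
      0 ≤ a → 0 ≤ b → a + b = 1 →
      φ (a • x + b • y) ≤ (a : EReal) * φ x + (b : EReal) * φ y)
    (hlsc : LowerSemicontinuous φ)
    (x : EuclideanSpace ℝ (Fin d))
    (hx : x ∈ interior {w | φ w ≠ ⊤})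
    (z : EuclideanSpace ℝ (Fin d)) :
    subdiffLiminf φ x z = (⨅ y ∈ subdiff φ x, ((⟪y, z⟫ : ℝ) : EReal)) ∧
    (subdiff φ x).Nonempty ∧
    ∃ r : ℝ, (⨅ y ∈ subdiff φ x, ((⟪y, z⟫ : ℝ) : EReal)) = (r : EReal) := by
  classical
  have hconvOn : ConvexOn ℝ {w | φ w ≠ ⊤} (fun w => (φ w).toReal) :=
    aux_convexOn φ hbot hconv
  have hconv' : ConvexOn ℝ (interior {w | φ w ≠ ⊤}) (fun w => (φ w).toReal) :=
    hconvOn.subset interior_subset hconvOn.1.interior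
  have hfc : ContinuousOn (fun w => (φ w).toReal) (interior {w | φ w ≠ ⊤}) :=
    ConvexOn.continuousOn isOpen_interior hconv'
  -- choose ε, C
  obtain ⟨ε0, hε0, hball0⟩ := Metric.isOpen_iff.mp isOpen_interior x hx
  set ε := ε0 / 4 with hεdef
  have hε : 0 < ε := by positivity
  have hball : Metric.closedBall x (3 * ε) ⊆ interior {w | φ w ≠ ⊤} := by
    intro w hw
    apply hball0
    rw [Metric.mem_ball]
    rw [Metric.mem_closedBall] at hw
    have hεe : ε = ε0 / 4 := hεdef
    linarith [hw]
  obtain ⟨C, hC⟩ := (isCompact_closedBall x (3 * ε)).exists_bound_of_continuousOn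
    (hfc.mono hball)
  have hCabs : ∀ w ∈ Metric.closedBall x (3 * ε), |(φ w).toReal| ≤ C := by
    intro w hw
    have := hC w hw
    rwa [Real.norm_eq_abs] at this
  -- nonemptiness at interior points
  have hnonempty : ∀ x' ∈ interior {w | φ w ≠ ⊤}, (subdiff φ x').Nonempty := by
    intro x' hx'
    obtain ⟨y, hy⟩ := aux_exists_real_subgrad {w | φ w ≠ ⊤} (fun w => (φ w).toReal) hconvOn hx'
    exact ⟨y, aux_mem_subdiff_of_forall φ hbot hconvOn hx' hy⟩
  -- uniform bound for subgradients near x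
  have hsub2 : ∀ x' ∈ Metric.closedBall x ε,
      Metric.closedBall x' (2 * ε) ⊆ Metric.closedBall x (3 * ε) := by
    intro x' hx' w hw
    rw [Metric.mem_closedBall] at *
    calc dist w x ≤ dist w x' + dist x' x := dist_triangle w x' x
    _ ≤ 3 * ε := by linarith
  set R := 2 * C / (2 * ε) with hRdef
  have hRbound : ∀ x' ∈ Metric.closedBall x ε, ∀ y ∈ subdiff φ x', ‖y‖ ≤ R := by
    intro x' hx' y hy
    refine aux_norm_bound φ hbot (by positivity) ?_ ?_ hy
    · exact (hsub2 x' hx').trans (hball.trans interior_subset)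
    · exact fun w hw => hCabs w (hsub2 x' hx' hw)
  -- basic facts about the infimum at x
  obtain ⟨y₀, hy₀⟩ := hnonempty x hx
  have hxball : x ∈ Metric.closedBall x ε := Metric.mem_closedBall_self hε.le
  have hFtop : (⨅ y ∈ subdiff φ x, ((⟪y, z⟫ : ℝ) : EReal)) ≤ ((⟪y₀, z⟫ : ℝ) : EReal) :=
    iInf₂_le y₀ hy₀
  have hFbot : ((-(R * ‖z‖) : ℝ) : EReal) ≤ ⨅ y ∈ subdiff φ x, ((⟪y, z⟫ : ℝ) : EReal) := by
    refine le_iInf₂ fun y hy => ?_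
    rw [EReal.coe_le_coe_iff]
    have h1 := abs_real_inner_le_norm y z
    have h2 := hRbound x hxball y hy
    have h3 := abs_le.mp h1
    nlinarith [norm_nonneg z, mul_le_mul_of_nonneg_right h2 (norm_nonneg z)]
  have hFne_top : (⨅ y ∈ subdiff φ x, ((⟪y, z⟫ : ℝ) : EReal)) ≠ ⊤ :=
    ne_top_of_le_ne_top (EReal.coe_ne_top _) hFtop
  have hFne_bot : (⨅ y ∈ subdiff φ x, ((⟪y, z⟫ : ℝ) : EReal)) ≠ ⊥ :=
    ((EReal.bot_lt_coe _).trans_le hFbot).ne'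
  -- liminf ≤ inf
  have hle : subdiffLiminf φ x z ≤ ⨅ y ∈ subdiff φ x, ((⟪y, z⟫ : ℝ) : EReal) := by
    refine Filter.liminf_le_of_frequently_le ?_
    intro h
    exact (h.self_of_nhds) le_rfl
  -- inf ≤ liminf
  have hge : (⨅ y ∈ subdiff φ x, ((⟪y, z⟫ : ℝ) : EReal)) ≤ subdiffLiminf φ x z := by
    rw [subdiffLiminf, Filter.le_liminf_iff]
    intro b hb
    obtain ⟨m, hbm, hmF⟩ := exists_between hb
    have hmtop : m ≠ ⊤ := (hmF.trans_le (hFtop.trans_lt (EReal.coe_lt_top _)).le).ne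
    have hmbot : m ≠ ⊥ := (bot_le.trans_lt hbm).ne'
    set r := m.toReal with hrdef
    have hmr : m = (r : EReal) := (EReal.coe_toReal hmtop hmbot).symm
    rw [hmr] at hbm hmF
    refine Filter.Eventually.mono ?_ (fun p hp => lt_of_lt_of_le hbm hp)
    -- show: ∀ᶠ p in 𝓝 (x, z), (r : EReal) ≤ ⨅ y ∈ subdiff φ p.1, coe ⟪y, p.2⟫
    by_contra hcon
    rw [Filter.not_eventually] at hcon
    have hfreq : ∃ᶠ p in nhds (x, z),
        (⨅ y ∈ subdiff φ p.1, ((⟪y, p.2⟫ : ℝ) : EReal)) < (r : EReal) :=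
      hcon.mono fun p hp => not_le.mp hp
    have hev : ∀ᶠ p in nhds (x, z),
        (p : EuclideanSpace ℝ (Fin d) × EuclideanSpace ℝ (Fin d)).1 ∈ Metric.closedBall x ε := by
      have h1 : ∀ᶠ w in nhds x, w ∈ Metric.closedBall x ε :=
        Filter.eventually_of_mem (Metric.closedBall_mem_nhds x hε) fun w hw => hw
      exact (continuous_fst.tendsto (x, z)).eventually h1
    have hclos : (x, z) ∈ closure {p : EuclideanSpace ℝ (Fin d) × EuclideanSpace ℝ (Fin d) |
        (⨅ y ∈ subdiff φ p.1, ((⟪y, p.2⟫ : ℝ) : EReal)) < (r : EReal) ∧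
        p.1 ∈ Metric.closedBall x ε} :=
      mem_closure_iff_frequently.mpr (hfreq.and_eventually hev)
    obtain ⟨p, hpmem, hptend⟩ := mem_closure_iff_seq_limit.mp hclos
    have hψs : ∀ n, (p n).1 ∈ Metric.closedBall x ε := fun n => (hpmem n).2
    have hpD : ∀ n, (p n).1 ∈ interior {w | φ w ≠ ⊤} := by
      intro n
      apply hball
      have := hψs n
      rw [Metric.mem_closedBall] at *
      linarith
    have hp1 : Filter.Tendsto (fun n => (p n).1) Filter.atTop (nhds x) :=
      (continuous_fst.tendsto (x, z)).comp hptend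
    have hp2 : Filter.Tendsto (fun n => (p n).2) Filter.atTop (nhds z) :=
      (continuous_snd.tendsto (x, z)).comp hptend
    have hy : ∀ n, ∃ y, y ∈ subdiff φ (p n).1 ∧ ⟪y, (p n).2⟫ < r := by
      intro n
      have h := (hpmem n).1
      obtain ⟨y, hy⟩ := iInf_lt_iff.mp h
      obtain ⟨hyS, hlt⟩ := iInf_lt_iff.mp hy
      exact ⟨y, hyS, by exact_mod_cast hlt⟩
    choose y hymem hylt using hy
    have hybnd : ∀ n, y n ∈ Metric.closedBall (0 : EuclideanSpace ℝ (Fin d)) R := by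
      intro n
      rw [Metric.mem_closedBall, dist_zero_right]
      exact hRbound _ (hψs n) _ (hymem n)
    obtain ⟨ylim, hylim_mem, ψ, hψmono, hψtend⟩ :=
      (isCompact_closedBall (0 : EuclideanSpace ℝ (Fin d)) R).tendsto_subseq hybnd
    have hψat : Filter.Tendsto ψ Filter.atTop Filter.atTop := hψmono.tendsto_atTop
    have hysub : ylim ∈ subdiff φ x := by
      apply aux_mem_subdiff_of_forall φ hbot hconvOn hx
      intro w hw
      have hterm : ∀ n, ⟪y (ψ n), w - (p (ψ n)).1⟫ + (φ ((p (ψ n)).1)).toReal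
          ≤ (φ w).toReal := fun n =>
        aux_subdiff_real φ hbot (interior_subset (hpD (ψ n))) (interior_subset hw)
          (hymem (ψ n))
      have htend1 : Filter.Tendsto (fun n => ⟪y (ψ n), w - (p (ψ n)).1⟫ +
          (φ ((p (ψ n)).1)).toReal) Filter.atTop (nhds (⟪ylim, w - x⟫ + (φ x).toReal)) := by
        refine Filter.Tendsto.add ?_ ?_
        · exact hψtend.inner (tendsto_const_nhds.sub (hp1.comp hψat))
        · exact ((hfc.continuousAt (isOpen_interior.mem_nhds hx)).tendsto).comp
            (hp1.comp hψat)
      exact le_of_tendsto_of_tendsto' htend1 tendsto_const_nhds hterm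
    have hzle : ⟪ylim, z⟫ ≤ r := by
      have htend2 : Filter.Tendsto (fun n => ⟪y (ψ n), (p (ψ n)).2⟫) Filter.atTop
          (nhds ⟪ylim, z⟫) := hψtend.inner (hp2.comp hψat)
      exact le_of_tendsto htend2 (Filter.Eventually.of_forall fun n => (hylt (ψ n)).le)
    have hcontr : (⨅ y ∈ subdiff φ x, ((⟪y, z⟫ : ℝ) : EReal)) ≤ (r : EReal) :=
      (iInf₂_le ylim hysub).trans (by exact_mod_cast hzle)
    exact absurd (hmF.trans_le hcontr) (lt_irrefl _)
  refine ⟨le_antisymm hle hge, ⟨y₀, hy₀⟩, ?_⟩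
  exact ⟨(⨅ y ∈ subdiff φ x, ((⟪y, z⟫ : ℝ) : EReal)).toReal,
    (EReal.coe_toReal hFne_top hFne_bot).symm⟩
end

section
/- Let x be a point of the boundary of Dom(φ) and let z ∈ ℝᵈ be such that inf_{n ∈ N(x)} ⟨n, z⟩ > 0, where N(x) is the set of exterior unit normals to the closure of Dom(φ) at x. Then ∂φ_*(x; z) = inf_{x* ∈ ∂φ(x)} ⟨x*, z⟩ (with the convention that the infimum over the empty set is +∞). -/
open scoped RealInnerProductSpace
open Filter

/-- The set of exterior unit normals to the closure of Dom(φ) at x. -/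
def extNormals {d : ℕ} (φ : EuclideanSpace ℝ (Fin d) → EReal)
    (x : EuclideanSpace ℝ (Fin d)) : Set (EuclideanSpace ℝ (Fin d)) :=
  {n | ‖n‖ = 1 ∧ ∀ w ∈ closure {w | φ w ≠ ⊤}, (⟪n, w - x⟫ : ℝ) ≤ 0}

private lemma ereal_rearrange {c r : ℝ} {a : EReal} (h : (c : EReal) + a ≤ (r : EReal)) :
    a ≤ ((r - c : ℝ) : EReal) := by
  induction a using EReal.rec with
  | bot => exact bot_le
  | coe a =>
      rw [← EReal.coe_add, EReal.coe_le_coe_iff] at h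
      exact_mod_cast (by linarith : a ≤ r - c)
  | top => rw [EReal.coe_add_top] at h; exact absurd h (by simp)

private lemma exists_real_lt' {a : EReal} (h : a ≠ ⊥) : ∃ C : ℝ, (C : EReal) < a := by
  induction a using EReal.rec with
  | bot => exact absurd rfl h
  | coe a => exact ⟨a - 1, by exact_mod_cast sub_one_lt a⟩
  | top => exact ⟨0, by simp⟩

private lemma mem_extNormals_of_blowup {d : ℕ} {φ : EuclideanSpace ℝ (Fin d) → EReal}
    (hbot : ∀ x, φ x ≠ ⊥) (hlsc : LowerSemicontinuous φ)
    {x n : EuclideanSpace ℝ (Fin d)} {xk yk : ℕ → EuclideanSpace ℝ (Fin d)} {t : ℕ → ℝ}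
    (hxk : Tendsto xk atTop (nhds x)) (hmem : ∀ k, yk k ∈ subdiff φ (xk k))
    (ht0 : ∀ k, 0 ≤ t k) (htlim : Tendsto t atTop (nhds 0))
    (hu : Tendsto (fun k => t k • yk k) atTop (nhds n)) (hn : ‖n‖ = 1) :
    n ∈ extNormals φ x := by
  refine ⟨hn, ?_⟩
  have key : ∀ w, φ w ≠ ⊤ → (⟪n, w - x⟫ : ℝ) ≤ 0 := by
    intro w hw
    obtain ⟨r, hr⟩ : ∃ r : ℝ, φ w = (r : EReal) :=
      ⟨(φ w).toReal, (EReal.coe_toReal hw (hbot w)).symm⟩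
    obtain ⟨C, hC⟩ := exists_real_lt' (hbot x)
    have hev : ∀ᶠ k in atTop, (C : EReal) < φ (xk k) := hxk.eventually (hlsc x _ hC)
    have hck : ∀ᶠ k in atTop, (⟪yk k, w - xk k⟫ : ℝ) ≤ r - C := by
      filter_upwards [hev] with k hk
      have h := hmem k w
      rw [hr] at h
      have := hk.trans_le (ereal_rearrange h)
      rw [EReal.coe_lt_coe_iff] at this
      linarith
    have h1 : Tendsto (fun k => (⟪t k • yk k, w - xk k⟫ : ℝ)) atTop (nhds (⟪n, w - x⟫ : ℝ)) :=
      hu.inner (tendsto_const_nhds.sub hxk)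
    have h2 : Tendsto (fun k => t k * (r - C)) atTop (nhds 0) := by
      simpa using htlim.mul_const (r - C)
    refine le_of_tendsto_of_tendsto h1 h2 ?_
    filter_upwards [hck] with k hk
    calc (⟪t k • yk k, w - xk k⟫ : ℝ) = t k * ⟪yk k, w - xk k⟫ := real_inner_smul_left _ _ _
      _ ≤ t k * (r - C) := mul_le_mul_of_nonneg_left hk (ht0 k)
  intro w hw
  have hclosed : IsClosed {w : EuclideanSpace ℝ (Fin d) | (⟪n, w - x⟫ : ℝ) ≤ 0} :=
    isClosed_le (Continuous.inner continuous_const (continuous_id.sub continuous_const))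
      continuous_const
  exact closure_minimal (fun w hw => key w hw) hclosed hw

private lemma subdiff_seq_closed {d : ℕ} {φ : EuclideanSpace ℝ (Fin d) → EReal}
    (hbot : ∀ x, φ x ≠ ⊥) (hlsc : LowerSemicontinuous φ)
    {x y : EuclideanSpace ℝ (Fin d)} {xk yk : ℕ → EuclideanSpace ℝ (Fin d)}
    (hxk : Tendsto xk atTop (nhds x)) (hyk : Tendsto yk atTop (nhds y))
    (hmem : ∀ k, yk k ∈ subdiff φ (xk k)) : y ∈ subdiff φ x := by
  intro w
  by_cases hw : φ w = ⊤
  · rw [hw]; exact le_top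
  obtain ⟨r, hr⟩ : ∃ r : ℝ, φ w = (r : EReal) :=
    ⟨(φ w).toReal, (EReal.coe_toReal hw (hbot w)).symm⟩
  have hck : Tendsto (fun k => (⟪yk k, w - xk k⟫ : ℝ)) atTop (nhds (⟪y, w - x⟫ : ℝ)) :=
    hyk.inner (tendsto_const_nhds.sub hxk)
  have h1 : ∀ k, φ (xk k) ≤ ((r - ⟪yk k, w - xk k⟫ : ℝ) : EReal) := by
    intro k
    have h := hmem k w
    rw [hr] at h
    exact ereal_rearrange h
  have h2 : φ x ≤ ((r - ⟪y, w - x⟫ : ℝ) : EReal) := by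
    by_contra h
    push_neg at h
    obtain ⟨m, hm1, hm2⟩ := EReal.exists_between_coe_real h
    have hev : ∀ᶠ k in atTop, (m : EReal) < φ (xk k) := hxk.eventually (hlsc x _ hm2)
    have hle : ∀ᶠ k in atTop, (⟪yk k, w - xk k⟫ : ℝ) ≤ r - m := by
      filter_upwards [hev] with k hk
      have := hk.trans_le (h1 k)
      rw [EReal.coe_lt_coe_iff] at this
      linarith
    have : (⟪y, w - x⟫ : ℝ) ≤ r - m := le_of_tendsto hck hle
    rw [EReal.coe_lt_coe_iff] at hm1
    linarith
  calc ((⟪y, w - x⟫ : ℝ) : EReal) + φ x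
      ≤ ((⟪y, w - x⟫ : ℝ) : EReal) + ((r - ⟪y, w - x⟫ : ℝ) : EReal) := by
        exact add_le_add_right h2 _
    _ = ((r : ℝ) : EReal) := by rw [← EReal.coe_add]; norm_num
    _ = φ w := hr.symm

/-- Let x be a boundary point of Dom(φ) and z ∈ ℝᵈ be such that
inf_{n ∈ N(x)} ⟨n, z⟩ > 0, where N(x) is the set of exterior unit normals to the
closure of Dom(φ) at x.  Then ∂φ_*(x; z) = inf_{x* ∈ ∂φ(x)} ⟨x*, z⟩ (the infimum over
the empty set being +∞). -/
theorem subdiffLiminf_eq_inf_boundary {d : ℕ} (hd : 0 < d)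
    (φ : EuclideanSpace ℝ (Fin d) → EReal)
    (hbot : ∀ x, φ x ≠ ⊥)
    (hproper : ∃ x, φ x ≠ ⊤)
    (hconv : ∀ x y : EuclideanSpace ℝ (Fin d), ∀ a b : ℝ,
      0 ≤ a → 0 ≤ b → a + b = 1 →
      φ (a • x + b • y) ≤ (a : EReal) * φ x + (b : EReal) * φ y)
    (hlsc : LowerSemicontinuous φ)
    (hint : (interior {w | φ w ≠ ⊤}).Nonempty)
    (x : EuclideanSpace ℝ (Fin d))
    (hx : x ∈ frontier {w | φ w ≠ ⊤})
    (z : EuclideanSpace ℝ (Fin d))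
    (hz : ∃ c > (0 : ℝ), ∀ n ∈ extNormals φ x, c ≤ (⟪n, z⟫ : ℝ)) :
    subdiffLiminf φ x z = ⨅ y ∈ subdiff φ x, ((⟪y, z⟫ : ℝ) : EReal) := by
  classical
  obtain ⟨c, hc0, hcz⟩ := hz
  set F : EuclideanSpace ℝ (Fin d) × EuclideanSpace ℝ (Fin d) → EReal :=
    fun p => ⨅ y ∈ subdiff φ p.1, ((⟪y, p.2⟫ : ℝ) : EReal) with hF
  have hdef : subdiffLiminf φ x z = Filter.liminf F (nhds (x, z)) := rfl
  have hRHS : F (x, z) = ⨅ y ∈ subdiff φ x, ((⟪y, z⟫ : ℝ) : EReal) := rfl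
  rw [hdef, ← hRHS]
  refine le_antisymm ?_ ?_
  · refine Filter.liminf_le_of_frequently_le' ?_
    have h1 : ∀ᶠ p in pure (x, z), F p ≤ F (x, z) := by
      rw [eventually_pure]
    exact h1.frequently.filter_mono (pure_le_nhds _)
  · rw [← EReal.ge_of_forall_gt_iff_ge]
    intro b hb
    have hev : ∀ᶠ p in nhds (x, z), (b : EReal) ≤ F p := by
      by_contra hcon
      rw [Filter.not_eventually] at hcon
      have hfreq : ∃ᶠ p in nhds (x, z), F p < (b : EReal) := by
        simpa [not_le] using hcon
      have hne : (nhds (x, z) ⊓ Filter.principal {p | F p < (b : EReal)}).NeBot :=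
        Filter.frequently_iff_neBot.1 hfreq
      obtain ⟨q, hq⟩ :=
        Filter.exists_seq_tendsto (nhds (x, z) ⊓ Filter.principal {p | F p < (b : EReal)})
      have hq1 : Tendsto q atTop (nhds (x, z)) := hq.mono_right inf_le_left
      have hq2' : Tendsto q atTop (Filter.principal {p | F p < (b : EReal)}) :=
        hq.mono_right inf_le_right
      have hq2 : ∀ᶠ k in atTop, F (q k) < (b : EReal) :=
        (Filter.tendsto_principal.1 hq2').mono fun k hk => hk
      obtain ⟨N, hN⟩ := Filter.eventually_atTop.1 hq2
      set p' : ℕ → EuclideanSpace ℝ (Fin d) × EuclideanSpace ℝ (Fin d) :=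
        fun k => q (k + N) with hp'def
      have hp' : Tendsto p' atTop (nhds (x, z)) :=
        hq1.comp (tendsto_add_atTop_nat N)
      have hFk : ∀ k, F (p' k) < (b : EReal) := fun k => hN _ (Nat.le_add_left N k)
      have hsel : ∀ k, ∃ y, y ∈ subdiff φ (p' k).1 ∧ (⟪y, (p' k).2⟫ : ℝ) < b := by
        intro k
        have h := hFk k
        rw [hF] at h
        obtain ⟨y, hy⟩ := iInf_lt_iff.1 h
        obtain ⟨hy1, hy2⟩ := iInf_lt_iff.1 hy
        exact ⟨y, hy1, by exact_mod_cast hy2⟩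
      choose Y hY1 hY2 using hsel
      have hxk : Tendsto (fun k => (p' k).1) atTop (nhds x) :=
        (continuousAt_fst.tendsto).comp hp'
      have hzk : Tendsto (fun k => (p' k).2) atTop (nhds z) :=
        (continuousAt_snd.tendsto).comp hp'
      by_cases hB : ∃ R : ℝ, ∃ᶠ k in atTop, ‖Y k‖ ≤ R
      · -- bounded subsequence
        obtain ⟨R, hR⟩ := hB
        obtain ⟨ψ, hψmono, hψ⟩ := extraction_of_frequently_atTop hR
        have humem : ∀ k, Y (ψ k) ∈ Metric.closedBall (0 : EuclideanSpace ℝ (Fin d)) R := by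
          intro k; simpa [Metric.mem_closedBall] using hψ k
        obtain ⟨y, _, ψ₂, hψ₂mono, hylim⟩ :=
          (isCompact_closedBall _ _).tendsto_subseq humem
        have hψat : Tendsto (fun k => ψ (ψ₂ k)) atTop atTop :=
          hψmono.tendsto_atTop.comp hψ₂mono.tendsto_atTop
        have hymem : y ∈ subdiff φ x :=
          subdiff_seq_closed hbot hlsc (hxk.comp hψat) hylim
            (fun k => hY1 (ψ (ψ₂ k)))
        have hlim : Tendsto (fun k => (⟪Y (ψ (ψ₂ k)), (p' (ψ (ψ₂ k))).2⟫ : ℝ)) atTop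
            (nhds (⟪y, z⟫ : ℝ)) := hylim.inner (hzk.comp hψat)
        have hyz : (⟪y, z⟫ : ℝ) ≤ b :=
          le_of_tendsto hlim (Eventually.of_forall fun k => (hY2 _).le)
        have hbig : (b : EReal) < ((⟪y, z⟫ : ℝ) : EReal) :=
          hb.trans_le (iInf₂_le y hymem)
        rw [EReal.coe_lt_coe_iff] at hbig
        linarith
      · -- blowup
        push_neg at hB
        have hYtop : Tendsto (fun k => ‖Y k‖) atTop atTop := by
          refine tendsto_atTop.2 fun R => ?_
          have := hB R
          exact this.mono fun k hk => hk.le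
        have humem : ∀ k, (‖Y k‖⁻¹ • Y k) ∈ Metric.closedBall (0 : EuclideanSpace ℝ (Fin d)) 1 := by
          intro k
          rcases eq_or_ne (Y k) 0 with h | h
          · simp [h]
          · simp [Metric.mem_closedBall, norm_smul, abs_of_nonneg,
              inv_mul_cancel₀ (norm_ne_zero_iff.2 h)]
        obtain ⟨n, _, ψ, hψmono, hulim⟩ :=
          (isCompact_closedBall _ _).tendsto_subseq humem
        have hψat : Tendsto ψ atTop atTop := hψmono.tendsto_atTop
        have ht : Tendsto (fun k => ‖Y (ψ k)‖⁻¹) atTop (nhds 0) :=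
          (hYtop.comp hψat).inv_tendsto_atTop
        have hev1 : ∀ᶠ k in atTop, 1 ≤ ‖Y (ψ k)‖ :=
          (hYtop.comp hψat).eventually_ge_atTop 1
        have hn1 : ‖n‖ = 1 := by
          have hlim : Tendsto (fun k => ‖(‖Y (ψ k)‖⁻¹ • Y (ψ k))‖) atTop (nhds ‖n‖) :=
            hulim.norm
          have heq : ∀ᶠ k in atTop, ‖(‖Y (ψ k)‖⁻¹ • Y (ψ k))‖ = 1 := by
            filter_upwards [hev1] with k hk
            have h0 : ‖Y (ψ k)‖ ≠ 0 := by linarith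
            simp [norm_smul, abs_of_nonneg, inv_mul_cancel₀ h0]
          exact tendsto_nhds_unique (hlim.congr' heq) tendsto_const_nhds
        have hnmem : n ∈ extNormals φ x :=
          mem_extNormals_of_blowup hbot hlsc (hxk.comp hψat)
            (fun k => hY1 (ψ k)) (fun k => inv_nonneg.2 (norm_nonneg _)) ht hulim hn1
        have hle : (⟪n, z⟫ : ℝ) ≤ 0 := by
          have h1 : Tendsto (fun k => (⟪(‖Y (ψ k)‖⁻¹ • Y (ψ k)), (p' (ψ k)).2⟫ : ℝ)) atTop
              (nhds (⟪n, z⟫ : ℝ)) := hulim.inner (hzk.comp hψat)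
          have h2 : Tendsto (fun k => ‖Y (ψ k)‖⁻¹ * b) atTop (nhds 0) := by
            simpa using ht.mul_const b
          refine le_of_tendsto_of_tendsto h1 h2 ?_
          refine Eventually.of_forall fun k => ?_
          calc (⟪(‖Y (ψ k)‖⁻¹ • Y (ψ k)), (p' (ψ k)).2⟫ : ℝ)
              = ‖Y (ψ k)‖⁻¹ * ⟪Y (ψ k), (p' (ψ k)).2⟫ := real_inner_smul_left _ _ _
            _ ≤ ‖Y (ψ k)‖⁻¹ * b :=
                mul_le_mul_of_nonneg_left (hY2 _).le (inv_nonneg.2 (norm_nonneg _))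
        linarith [hcz n hnmem]
    exact Filter.le_liminf_of_le (by isBoundedDefault) hev
end

section
/- Let K ⊆ ℝᵈ be a closed convex set with nonempty interior and let φ = I_K be its indicator function. Then for x ∈ K and z ∈ ℝᵈ: ∂φ_*(x; z) = 0 if x ∈ Int(K), and also if x lies on the boundary of K and inf_{n ∈ N(x)} ⟨n, z⟩ > 0; whereas ∂φ_*(x; z) = −∞ if x lies on the boundary of K and inf_{n ∈ N(x)} ⟨n, z⟩ ≤ 0. -/
open scoped RealInnerProductSpace

open Classical in
/-- The indicator function of a set `K ⊆ ℝᵈ`, with values in `(−∞, +∞]`. -/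
noncomputable def indicatorFn {d : ℕ} (K : Set (EuclideanSpace ℝ (Fin d))) :
    EuclideanSpace ℝ (Fin d) → EReal :=
  fun w => if w ∈ K then (0 : EReal) else ⊤

/-- The set of exterior unit normals to the closed convex set K at x. -/
def extNormalsSet {d : ℕ} (K : Set (EuclideanSpace ℝ (Fin d)))
    (x : EuclideanSpace ℝ (Fin d)) : Set (EuclideanSpace ℝ (Fin d)) :=
  {n | ‖n‖ = 1 ∧ ∀ w ∈ K, (⟪n, w - x⟫ : ℝ) ≤ 0}

lemma mem_subdiff_indicator {d : ℕ} {K : Set (EuclideanSpace ℝ (Fin d))}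
    {x' y : EuclideanSpace ℝ (Fin d)} (hx' : x' ∈ K) :
    y ∈ subdiff (indicatorFn K) x' ↔ ∀ w ∈ K, (⟪y, w - x'⟫ : ℝ) ≤ 0 := by
  simp only [subdiff, indicatorFn, Set.mem_setOf_eq, if_pos hx']
  constructor
  · intro h w hw
    have := h w
    rw [if_pos hw, add_zero] at this
    exact_mod_cast this
  · intro h w
    by_cases hw : w ∈ K
    · rw [if_pos hw, add_zero]
      exact_mod_cast h w hw
    · rw [if_neg hw]; exact le_top

lemma subdiff_indicator_empty {d : ℕ} {K : Set (EuclideanSpace ℝ (Fin d))}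
    {x' : EuclideanSpace ℝ (Fin d)} (hx' : x' ∉ K) (hK : K.Nonempty) :
    subdiff (indicatorFn K) x' = ∅ := by
  ext y
  simp only [Set.mem_empty_iff_false, iff_false, subdiff, Set.mem_setOf_eq, indicatorFn,
    if_neg hx']
  intro h
  obtain ⟨w, hw⟩ := hK
  have := h w
  rw [if_pos hw, EReal.add_top_of_ne_bot (EReal.coe_ne_bot _)] at this
  exact EReal.zero_ne_top (top_le_iff.mp this)

lemma zero_mem_subdiff_indicator {d : ℕ} {K : Set (EuclideanSpace ℝ (Fin d))}
    {x' : EuclideanSpace ℝ (Fin d)} (hx' : x' ∈ K) :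
    0 ∈ subdiff (indicatorFn K) x' := by
  rw [mem_subdiff_indicator hx']
  intro w _
  simp [inner_zero_left]

lemma smul_mem_subdiff_indicator {d : ℕ} {K : Set (EuclideanSpace ℝ (Fin d))}
    {x' y : EuclideanSpace ℝ (Fin d)} (hx' : x' ∈ K)
    (hy : y ∈ subdiff (indicatorFn K) x') {t : ℝ} (ht : 0 ≤ t) :
    t • y ∈ subdiff (indicatorFn K) x' := by
  rw [mem_subdiff_indicator hx'] at hy ⊢
  intro w hw
  rw [real_inner_smul_left]
  exact mul_nonpos_of_nonneg_of_nonpos ht (hy w hw)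

lemma F_nonneg {d : ℕ} {K : Set (EuclideanSpace ℝ (Fin d))}
    {x' z' : EuclideanSpace ℝ (Fin d)}
    (h : ∀ y ∈ subdiff (indicatorFn K) x', 0 ≤ (⟪y, z'⟫ : ℝ)) :
    (0 : EReal) ≤ ⨅ y ∈ subdiff (indicatorFn K) x', ((⟪y, z'⟫ : ℝ) : EReal) := by
  refine le_iInf fun y => le_iInf fun hy => ?_
  exact_mod_cast h y hy

lemma F_eq_zero {d : ℕ} {K : Set (EuclideanSpace ℝ (Fin d))}
    {x' z' : EuclideanSpace ℝ (Fin d)} (hx' : x' ∈ K)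
    (h : ∀ y ∈ subdiff (indicatorFn K) x', 0 ≤ (⟪y, z'⟫ : ℝ)) :
    (⨅ y ∈ subdiff (indicatorFn K) x', ((⟪y, z'⟫ : ℝ) : EReal)) = 0 := by
  refine le_antisymm ?_ (F_nonneg h)
  have h0 := zero_mem_subdiff_indicator hx' (K := K)
  calc (⨅ y ∈ subdiff (indicatorFn K) x', ((⟪y, z'⟫ : ℝ) : EReal))
      ≤ ((⟪(0 : EuclideanSpace ℝ (Fin d)), z'⟫ : ℝ) : EReal) := iInf₂_le _ h0
    _ = 0 := by simp [inner_zero_left]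

lemma F_eq_bot {d : ℕ} {K : Set (EuclideanSpace ℝ (Fin d))}
    {x' z' y : EuclideanSpace ℝ (Fin d)} (hx' : x' ∈ K)
    (hy : y ∈ subdiff (indicatorFn K) x') (hneg : (⟪y, z'⟫ : ℝ) < 0) :
    (⨅ y ∈ subdiff (indicatorFn K) x', ((⟪y, z'⟫ : ℝ) : EReal)) = ⊥ := by
  set c : ℝ := (⟪y, z'⟫ : ℝ) with hc
  rw [EReal.eq_bot_iff_forall_lt]
  intro r
  set t : ℝ := max 0 ((r - 1) / c) with hT
  have ht0 : 0 ≤ t := le_max_left _ _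
  have hmem := smul_mem_subdiff_indicator hx' hy ht0
  have h1 : (⨅ y ∈ subdiff (indicatorFn K) x', ((⟪y, z'⟫ : ℝ) : EReal))
      ≤ ((⟪t • y, z'⟫ : ℝ) : EReal) := iInf₂_le _ hmem
  have h2 : (⟪t • y, z'⟫ : ℝ) = t * c := by rw [real_inner_smul_left]
  have h3 : t * c < r := by
    rcases le_or_gt r 0 with hr | hr
    · have hte : t = (r - 1) / c := by
        rw [hT, max_eq_right]
        have : r - 1 ≤ 0 := by linarith
        exact div_nonneg_of_nonpos (by linarith) (by linarith)
      rw [hte, div_mul_cancel₀ _ (ne_of_lt hneg)]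
      linarith
    · calc t * c ≤ 0 := mul_nonpos_of_nonneg_of_nonpos ht0 hneg.le
        _ < r := hr
  calc (⨅ y ∈ subdiff (indicatorFn K) x', ((⟪y, z'⟫ : ℝ) : EReal))
      ≤ ((t * c : ℝ) : EReal) := by rw [← h2]; exact h1
    _ < (r : EReal) := by exact_mod_cast h3

lemma subdiff_indicator_interior {d : ℕ} {K : Set (EuclideanSpace ℝ (Fin d))}
    {x' : EuclideanSpace ℝ (Fin d)} (hx' : x' ∈ interior K) :
    subdiff (indicatorFn K) x' = {0} := by
  ext y
  simp only [Set.mem_singleton_iff]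
  constructor
  · intro hy
    rw [mem_subdiff_indicator (interior_subset hx')] at hy
    obtain ⟨ε, hε, hball⟩ := Metric.isOpen_iff.mp isOpen_interior x' hx'
    by_contra hy0
    have hny : (0:ℝ) < ‖y‖ := norm_pos_iff.mpr hy0
    set t : ℝ := ε / (2 * ‖y‖) with hT
    have ht : 0 < t := by positivity
    have hw : x' + t • y ∈ K := by
      apply interior_subset; apply hball
      rw [Metric.mem_ball, dist_eq_norm, add_sub_cancel_left, norm_smul,
        Real.norm_eq_abs, abs_of_pos ht, hT]
      have he : ε / (2 * ‖y‖) * ‖y‖ = ε / 2 := by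
        field_simp
      rw [he]
      linarith
    have := hy _ hw
    rw [add_sub_cancel_left, real_inner_smul_right, real_inner_self_eq_norm_sq] at this
    nlinarith [mul_pos ht (pow_pos hny 2)]
  · rintro rfl
    exact zero_mem_subdiff_indicator (interior_subset hx')


lemma extNormals_nonempty {d : ℕ} {K : Set (EuclideanSpace ℝ (Fin d))}
    (hconv : Convex ℝ K) (hint : (interior K).Nonempty)
    {x : EuclideanSpace ℝ (Fin d)} (hxK : x ∈ K) (hx : x ∈ frontier K) :
    (extNormalsSet K x).Nonempty := by
  have hxi : x ∉ interior K := hx.2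
  obtain ⟨f, hf⟩ := geometric_hahn_banach_open_point hconv.interior isOpen_interior hxi
  obtain ⟨a, ha⟩ := hint
  set v : EuclideanSpace ℝ (Fin d) := (InnerProductSpace.toDual ℝ _).symm f with hv
  have hfv : ∀ w, (⟪v, w⟫ : ℝ) = f w := fun w => InnerProductSpace.toDual_symm_apply
  have hva : (⟪v, a⟫ : ℝ) < ⟪v, x⟫ := by rw [hfv, hfv]; exact hf a ha
  have hv0 : v ≠ 0 := by
    intro h
    rw [h, inner_zero_left, inner_zero_left] at hva
    exact lt_irrefl _ hva
  have key : ∀ w ∈ K, (⟪v, w⟫ : ℝ) ≤ ⟪v, x⟫ := by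
    intro w hw
    have hseg : ∀ t : ℝ, t ∈ Set.Ioc (0:ℝ) 1 → (⟪v, w + t • (a - w)⟫ : ℝ) ≤ ⟪v, x⟫ := by
      intro t ht
      rw [hfv, hfv]
      exact (hf _ (hconv.add_smul_sub_mem_interior hw ha ht)).le
    have hcont : Filter.Tendsto (fun t : ℝ => (⟪v, w + t • (a - w)⟫ : ℝ))
        (nhdsWithin 0 (Set.Ioc (0:ℝ) 1)) (nhds (⟪v, w⟫ : ℝ)) := by
      have hc : Continuous fun t : ℝ => (⟪v, w + t • (a - w)⟫ : ℝ) := by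
        apply Continuous.inner continuous_const
        exact continuous_const.add (continuous_id.smul continuous_const)
      have h0 := hc.tendsto 0
      simp only [zero_smul, add_zero] at h0
      exact h0.mono_left nhdsWithin_le_nhds
    have hne : (nhdsWithin (0:ℝ) (Set.Ioc (0:ℝ) 1)).NeBot := by
      exact left_nhdsWithin_Ioc_neBot (by norm_num)
    exact le_of_tendsto hcont (Filter.eventually_of_mem self_mem_nhdsWithin hseg)
  refine ⟨‖v‖⁻¹ • v, norm_smul_inv_norm hv0, ?_⟩
  intro w hw
  rw [real_inner_smul_left, inner_sub_right]
  have : (0:ℝ) ≤ ‖v‖⁻¹ := by positivity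
  have h2 := key w hw
  apply mul_nonpos_of_nonneg_of_nonpos this
  linarith

lemma normals_uniform {d : ℕ} {K : Set (EuclideanSpace ℝ (Fin d))}
    {x z : EuclideanSpace ℝ (Fin d)} {c : ℝ} (hc : 0 < c)
    (h : ∀ n ∈ extNormalsSet K x, c ≤ (⟪n, z⟫ : ℝ)) :
    ∃ δ > (0:ℝ), ∀ x' n : EuclideanSpace ℝ (Fin d), ‖x' - x‖ < δ → ‖n‖ = 1 →
      (∀ w ∈ K, (⟪n, w - x'⟫ : ℝ) ≤ 0) → c / 2 ≤ (⟪n, z⟫ : ℝ) := by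
  by_contra hcon
  push_neg at hcon
  have hstep : ∀ k : ℕ, ∃ x' n : EuclideanSpace ℝ (Fin d),
      ‖x' - x‖ < 1/(k+1) ∧ ‖n‖ = 1 ∧ (∀ w ∈ K, (⟪n, w - x'⟫ : ℝ) ≤ 0) ∧
      (⟪n, z⟫ : ℝ) < c / 2 := by
    intro k
    obtain ⟨x', n, h1, h2, h3, h4⟩ := hcon (1/(k+1)) (by positivity)
    exact ⟨x', n, h1, h2, h3, h4⟩
  choose xf nf h1 h2 h3 h4 using hstep
  have hsph : IsCompact (Metric.sphere (0 : EuclideanSpace ℝ (Fin d)) 1) :=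
    isCompact_sphere _ _
  obtain ⟨n, hn, ψ, hψ, hlim⟩ := hsph.tendsto_subseq
    (x := nf) (fun k => by simp [mem_sphere_zero_iff_norm, h2 k])
  have hxlim : Filter.Tendsto (fun k => xf (ψ k)) Filter.atTop (nhds x) := by
    rw [tendsto_iff_norm_sub_tendsto_zero]
    apply squeeze_zero (fun k => norm_nonneg _) (fun k => (h1 (ψ k)).le)
    have hψk := hψ.tendsto_atTop
    exact tendsto_one_div_add_atTop_nhds_zero_nat.comp hψk
  have hnN : n ∈ extNormalsSet K x := by
    refine ⟨mem_sphere_zero_iff_norm.mp hn, ?_⟩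
    intro w hw
    have htd : Filter.Tendsto (fun k => (⟪nf (ψ k), w - xf (ψ k)⟫ : ℝ)) Filter.atTop
        (nhds (⟪n, w - x⟫ : ℝ)) :=
      Filter.Tendsto.inner hlim (Filter.Tendsto.sub tendsto_const_nhds hxlim)
    exact le_of_tendsto htd (Filter.Eventually.of_forall fun k => h3 (ψ k) w hw)
  have hcz : c ≤ (⟪n, z⟫ : ℝ) := h n hnN
  have hcz2 : (⟪n, z⟫ : ℝ) ≤ c / 2 := by
    have htd : Filter.Tendsto (fun k => (⟪nf (ψ k), z⟫ : ℝ)) Filter.atTop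
        (nhds (⟪n, z⟫ : ℝ)) := Filter.Tendsto.inner hlim tendsto_const_nhds
    exact le_of_tendsto htd (Filter.Eventually.of_forall fun k => (h4 (ψ k)).le)
  linarith


/-- Let K ⊆ ℝᵈ be a closed convex set with nonempty interior and let
φ = I_K be its indicator function.  For x ∈ K and z ∈ ℝᵈ: ∂φ_*(x; z) = 0 if
x ∈ Int(K), and also if x ∈ Bd(K) with inf_{n ∈ N(x)} ⟨n, z⟩ > 0; whereas
∂φ_*(x; z) = −∞ if x ∈ Bd(K) with inf_{n ∈ N(x)} ⟨n, z⟩ ≤ 0. -/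
theorem subdiffLiminf_indicator {d : ℕ} (hd : 0 < d)
    (K : Set (EuclideanSpace ℝ (Fin d)))
    (hcl : IsClosed K) (hconv : Convex ℝ K) (hint : (interior K).Nonempty)
    (x : EuclideanSpace ℝ (Fin d)) (hx : x ∈ K)
    (z : EuclideanSpace ℝ (Fin d)) :
    (x ∈ interior K → subdiffLiminf (indicatorFn K) x z = 0) ∧
    (x ∈ frontier K →
      (∃ c > (0 : ℝ), ∀ n ∈ extNormalsSet K x, c ≤ (⟪n, z⟫ : ℝ)) →
      subdiffLiminf (indicatorFn K) x z = 0) ∧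
    (x ∈ frontier K →
      ¬(∃ c > (0 : ℝ), ∀ n ∈ extNormalsSet K x, c ≤ (⟪n, z⟫ : ℝ)) →
      subdiffLiminf (indicatorFn K) x z = ⊥) := by
  have hKne : K.Nonempty := ⟨x, hx⟩
  set F : EuclideanSpace ℝ (Fin d) × EuclideanSpace ℝ (Fin d) → EReal :=
    fun p => ⨅ y ∈ subdiff (indicatorFn K) p.1, ((⟪y, p.2⟫ : ℝ) : EReal) with hF
  have hLim : ∀ z', subdiffLiminf (indicatorFn K) x z' = Filter.liminf F (nhds (x, z')) :=
    fun _ => rfl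
  refine ⟨?_, ?_, ?_⟩
  · -- interior case
    intro hxi
    have hev : ∀ᶠ p : EuclideanSpace ℝ (Fin d) × EuclideanSpace ℝ (Fin d) in nhds (x, z),
        F p = 0 := by
      have hmem : (interior K) ×ˢ (Set.univ : Set (EuclideanSpace ℝ (Fin d))) ∈ nhds (x, z) :=
        prod_mem_nhds (isOpen_interior.mem_nhds hxi) Filter.univ_mem
      filter_upwards [hmem] with p hp
      simp only [hF, subdiff_indicator_interior hp.1]
      simp [inner_zero_left]
    rw [hLim, Filter.liminf_congr hev, Filter.liminf_const]
  · -- frontier, positive case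
    rintro hxf ⟨c, hc, hcn⟩
    obtain ⟨δ, hδ, hδn⟩ := normals_uniform hc hcn
    have hge : (0 : EReal) ≤ Filter.liminf F (nhds (x, z)) := by
      refine Filter.le_liminf_of_le (by isBoundedDefault) ?_
      have hmem : (Metric.ball x δ) ×ˢ (Metric.ball z (c/4)) ∈ nhds (x, z) :=
        prod_mem_nhds (Metric.ball_mem_nhds _ hδ) (Metric.ball_mem_nhds _ (by linarith))
      filter_upwards [hmem] with p hp
      obtain ⟨hp1, hp2⟩ := hp
      apply F_nonneg
      intro y hy
      by_cases hy0 : y = 0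
      · simp [hy0, inner_zero_left]
      · have hpK : p.1 ∈ K := by
          by_contra hpK
          rw [subdiff_indicator_empty hpK hKne] at hy
          exact hy
        rw [mem_subdiff_indicator hpK] at hy
        have hny : (0:ℝ) < ‖y‖ := norm_pos_iff.mpr hy0
        set n := ‖y‖⁻¹ • y with hn
        have hnn : ‖n‖ = 1 := norm_smul_inv_norm hy0
        have hnorm : ∀ w ∈ K, (⟪n, w - p.1⟫ : ℝ) ≤ 0 := by
          intro w hw
          rw [hn, real_inner_smul_left]
          exact mul_nonpos_of_nonneg_of_nonpos (by positivity) (hy w hw)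
        have hnz : c/2 ≤ (⟪n, z⟫ : ℝ) := by
          apply hδn p.1 n _ hnn hnorm
          rw [← dist_eq_norm]
          exact hp1
        have hnz2 : (0:ℝ) ≤ ⟪n, p.2⟫ := by
          have hsplit : (⟪n, p.2⟫ : ℝ) = ⟪n, z⟫ + ⟪n, p.2 - z⟫ := by
            rw [← inner_add_right]
            rw [add_sub_cancel]
          have habs : |(⟪n, p.2 - z⟫ : ℝ)| ≤ ‖p.2 - z‖ := by
            calc |(⟪n, p.2 - z⟫ : ℝ)| ≤ ‖n‖ * ‖p.2 - z‖ := abs_real_inner_le_norm _ _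
              _ = ‖p.2 - z‖ := by rw [hnn, one_mul]
          have hd2 : ‖p.2 - z‖ < c/4 := by rw [← dist_eq_norm]; exact hp2
          have := abs_le.mp habs
          rw [hsplit]
          linarith [this.1]
        have hyn : (⟪y, p.2⟫ : ℝ) = ‖y‖ * ⟪n, p.2⟫ := by
          rw [hn, real_inner_smul_left]
          field_simp
        rw [hyn]
        positivity
    have hF0 : F (x, z) = 0 := by
      apply F_eq_zero hx
      intro y hy
      show (0:ℝ) ≤ (⟪y, z⟫ : ℝ)
      by_cases hy0 : y = 0
      · simp [hy0, inner_zero_left]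
      · rw [mem_subdiff_indicator hx] at hy
        have hny : (0:ℝ) < ‖y‖ := norm_pos_iff.mpr hy0
        have hnz : c ≤ (⟪‖y‖⁻¹ • y, z⟫ : ℝ) := by
          apply hcn
          refine ⟨norm_smul_inv_norm hy0, ?_⟩
          intro w hw
          rw [real_inner_smul_left]
          exact mul_nonpos_of_nonneg_of_nonpos (by positivity) (hy w hw)
        rw [real_inner_smul_left] at hnz
        by_contra hcon
        push_neg at hcon
        have := mul_neg_of_pos_of_neg (inv_pos.mpr hny) hcon
        linarith
    have hfr : ∃ᶠ p in nhds
        ((x, z) : EuclideanSpace ℝ (Fin d) × EuclideanSpace ℝ (Fin d)), F p ≤ 0 :=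
      Filter.frequently_iff.mpr fun hU => ⟨(x, z), mem_of_mem_nhds hU, le_of_eq hF0⟩
    have hle : Filter.liminf F (nhds (x, z)) ≤ 0 :=
      Filter.liminf_le_of_frequently_le hfr
    rw [hLim]
    exact le_antisymm hle hge
  · -- frontier, negative case
    intro hxf hnc
    have hNne : (extNormalsSet K x).Nonempty := extNormals_nonempty hconv hint hx hxf
    have hNcl : IsClosed (extNormalsSet K x) := by
      have : extNormalsSet K x =
          {n | ‖n‖ = 1} ∩ ⋂ w ∈ K, {n | (⟪n, w - x⟫ : ℝ) ≤ 0} := by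
        ext n
        simp [extNormalsSet, Set.mem_iInter]
      rw [this]
      refine IsClosed.inter (isClosed_eq continuous_norm continuous_const) ?_
      refine isClosed_biInter fun w hw => ?_
      exact isClosed_le (Continuous.inner continuous_id continuous_const) continuous_const
    have hNcpt : IsCompact (extNormalsSet K x) := by
      apply (isCompact_sphere (0 : EuclideanSpace ℝ (Fin d)) 1).of_isClosed_subset hNcl
      intro n hn
      rw [mem_sphere_zero_iff_norm]
      exact hn.1
    have hcontz : Continuous fun n : EuclideanSpace ℝ (Fin d) => (⟪n, z⟫ : ℝ) :=
      Continuous.inner continuous_id continuous_const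
    obtain ⟨n₀, hn₀, hmin⟩ := hNcpt.exists_isMinOn hNne hcontz.continuousOn
    have hn₀z : (⟪n₀, z⟫ : ℝ) ≤ 0 := by
      by_contra hpos
      push_neg at hpos
      exact hnc ⟨⟪n₀, z⟫, hpos, fun n hn => by simpa using hmin hn⟩
    have hpath : Filter.Tendsto
        (fun t : ℝ => ((x, z - t • n₀) :
          EuclideanSpace ℝ (Fin d) × EuclideanSpace ℝ (Fin d)))
        (nhdsWithin 0 (Set.Ioi 0)) (nhds (x, z)) := by
      have hc : Continuous fun t : ℝ =>
          ((x, z - t • n₀) : EuclideanSpace ℝ (Fin d) × EuclideanSpace ℝ (Fin d)) :=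
        continuous_const.prodMk (continuous_const.sub (continuous_id.smul continuous_const))
      have h0 := hc.tendsto 0
      simp only [zero_smul, sub_zero] at h0
      exact h0.mono_left nhdsWithin_le_nhds
    have hbot : ∀ t : ℝ, 0 < t → F (x, z - t • n₀) = ⊥ := by
      intro t ht
      apply F_eq_bot hx (y := n₀)
      · rw [mem_subdiff_indicator hx]
        exact hn₀.2
      · have hval : (⟪n₀, z - t • n₀⟫ : ℝ) = ⟪n₀, z⟫ - t * ‖n₀‖^2 := by
          rw [inner_sub_right, real_inner_smul_right, real_inner_self_eq_norm_sq]
        rw [hval, hn₀.1]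
        nlinarith
    have hfreq : ∃ᶠ p in nhds
        ((x, z) : EuclideanSpace ℝ (Fin d) × EuclideanSpace ℝ (Fin d)), F p ≤ ⊥ := by
      apply hpath.frequently
      apply Filter.Eventually.frequently
      filter_upwards [self_mem_nhdsWithin] with t ht
      exact (hbot t ht).le
    rw [hLim]
    exact le_bot_iff.mp (Filter.liminf_le_of_frequently_le hfreq)
end
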